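/- arXiv:1111.2401 — 12 statements merged into one kernel-verified Lean document; each statement's English description precedes it below -/
import Mathlib

section
/- For all g, h, k, l in a linearly ordered group G, the composition of the partial bijections α_h^g and α_l^k (applying α_h^g first) equals α_b^a, where a = (h ∨ k)·h⁻¹·g and b = (h ∨ k)·k⁻¹·l. Consequently the set 𝓑(G) = {α_h^g : g, h ∈ G} of such partial bijections is closed under composition of partial maps. -/
variable {G : Type*} [Group G] [LinearOrder G]
  [CovariantClass G G (· * ·) (· ≤ ·)] [CovariantClass G G (Function.swap (· * ·)) (· ≤ ·)]

/-- The partial bijection `α_h^g` of `G` with domain the positive cone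
`G⁺(g) = {x | g ≤ x}`, given by `x ↦ x·g⁻¹·h`. -/
def alphaMap (g h : G) : G →. G := fun x => ⟨g ≤ x, fun _ => x * g⁻¹ * h⟩

/-- The family `𝓑(G)` of all partial bijections `α_h^g`. -/
def BGset (G : Type*) [Group G] [LinearOrder G] : Set (G →. G) :=
  {p | ∃ g h : G, p = alphaMap g h}

set_option linter.unusedSectionVars false in
theorem alpha_comp (g h k l : G) :
    PFun.comp (alphaMap k l) (alphaMap g h) =
      alphaMap (max h k * h⁻¹ * g) (max h k * k⁻¹ * l) := by
  have key : ∀ x : G, (g ≤ x ∧ k ≤ x * g⁻¹ * h) ↔ max h k * h⁻¹ * g ≤ x := by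
    intro x
    have e1 : g ≤ x ↔ h ≤ x * g⁻¹ * h := by
      constructor
      · intro hx
        have := mul_le_mul_left hx (g⁻¹ * h)
        simpa [mul_assoc] using this
      · intro hx
        have := mul_le_mul_left hx (h⁻¹ * g)
        simpa [mul_assoc] using this
    have e2 : max h k * h⁻¹ * g ≤ x ↔ max h k ≤ x * g⁻¹ * h := by
      constructor
      · intro hx
        have := mul_le_mul_left hx (g⁻¹ * h)
        simpa [mul_assoc] using this
      · intro hx
        have := mul_le_mul_left hx (h⁻¹ * g)
        simpa [mul_assoc] using this
    rw [e1, e2, ← max_le_iff]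
  apply PFun.ext
  intro x y
  rw [PFun.comp_apply]
  refine Part.mem_bind_iff.trans ?_
  simp only [alphaMap, Part.mem_mk_iff]
  constructor
  · rintro ⟨z, ⟨hg, rfl⟩, hk, rfl⟩
    exact ⟨(key x).1 ⟨hg, hk⟩, by group⟩
  · rintro ⟨hd, rfl⟩
    obtain ⟨hg, hk⟩ := (key x).2 hd
    exact ⟨x * g⁻¹ * h, ⟨hg, rfl⟩, hk, by group⟩


/-- Composing `α_h^g` first and then `α_l^k` gives `α_b^a` with `a = (h ∨ k)·h⁻¹·g` and
`b = (h ∨ k)·k⁻¹·l`; consequently `𝓑(G)` is closed under composition of partial maps. -/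
theorem stmt0 {G : Type*} [Group G] [LinearOrder G]
    [CovariantClass G G (· * ·) (· ≤ ·)]
    [CovariantClass G G (Function.swap (· * ·)) (· ≤ ·)] (g h k l : G) :
    PFun.comp (alphaMap k l) (alphaMap g h) =
      alphaMap (max h k * h⁻¹ * g) (max h k * k⁻¹ * l) ∧
    ∀ p ∈ BGset G, ∀ q ∈ BGset G, PFun.comp q p ∈ BGset G := by
  refine ⟨alpha_comp g h k l, ?_⟩
  rintro p ⟨a, b, rfl⟩ q ⟨c, d, rfl⟩
  exact ⟨_, _, alpha_comp a b c d⟩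
end

section
/- For a linearly ordered group G, the multiplication on S_G = G × G given by (a,b)·(c,d) = (c·b⁻¹·a, d) if b < c; (a,d) if b = c; (a, b·c⁻¹·d) if b > c, is associative; for every x = (a,b) ∈ S_G the element y = (b,a) satisfies x·y·x = x and y·x·y = y, and y is the unique element of S_G with these two properties (so S_G is an inverse semigroup); moreover an element (g,h) ∈ S_G satisfies (g,h)·(g,h) = (g,h) if and only if g = h. -/
set_option linter.unusedSectionVars false


variable {G : Type*} [Group G] [LinearOrder G]
  [CovariantClass G G (· * ·) (· ≤ ·)] [CovariantClass G G (Function.swap (· * ·)) (· ≤ ·)]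

/-- The multiplication of the semigroup `S_G` on `G × G`:
`(a,b)·(c,d) = (c·b⁻¹·a, d)` if `b < c`; `(a,d)` if `b = c`; `(a, b·c⁻¹·d)` if `b > c`. -/
def Smul (x y : G × G) : G × G :=
  if x.2 < y.1 then (y.1 * x.2⁻¹ * x.1, y.2)
  else if x.2 = y.1 then (x.1, y.2)
  else (x.1, x.2 * y.1⁻¹ * y.2)

lemma sm_lt {a b c d : G} (h : b < c) : Smul (a,b) (c,d) = (c*b⁻¹*a, d) := by
  simp only [Smul]; rw [if_pos h]

lemma sm_eq {a b c d : G} (h : b = c) : Smul (a,b) (c,d) = (a, d) := by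
  simp only [Smul]; rw [if_neg (by simp [h]), if_pos h]

lemma sm_gt {a b c d : G} (h : c < b) : Smul (a,b) (c,d) = (a, b*c⁻¹*d) := by
  simp only [Smul]; rw [if_neg h.not_gt, if_neg h.ne']

lemma lt_mul_inv_mul {c d e : G} (h : d < e) : c < e * d⁻¹ * c := by
  have := mul_lt_mul_left h (d⁻¹ * c)
  simpa [mul_assoc] using this

lemma mul_inv_mul_lt_iff {b c d e : G} : b * c⁻¹ * d < e ↔ b < e * d⁻¹ * c := by
  constructor
  · intro h
    have := mul_lt_mul_left h (d⁻¹ * c)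
    simpa [mul_assoc] using this
  · intro h
    have := mul_lt_mul_left h (c⁻¹ * d)
    simpa [mul_assoc] using this

lemma mul_inv_mul_eq_iff {b c d e : G} : b * c⁻¹ * d = e ↔ b = e * d⁻¹ * c := by
  constructor <;> intro h <;> subst h <;> group

/-- From `u * v⁻¹ * w = w` deduce `u = v`. -/
lemma cancel₁ {u v w : G} (h : u * v⁻¹ * w = w) : u = v := by
  have h2 : u * v⁻¹ = 1 := mul_right_cancel (b := w) (by simpa using h)
  exact mul_inv_eq_one.mp h2

lemma smul_assoc' (x y z : G × G) : Smul (Smul x y) z = Smul x (Smul y z) := by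
  obtain ⟨a,b⟩ := x; obtain ⟨c,d⟩ := y; obtain ⟨e,f⟩ := z
  rcases lt_trichotomy b c with hbc | hbc | hbc
  · rcases lt_trichotomy d e with hde | hde | hde
    · rw [sm_lt hbc, sm_lt hde, sm_lt hde, sm_lt (hbc.trans (lt_mul_inv_mul hde))]
      simp [mul_assoc]
    · rw [sm_lt hbc, sm_eq hde, sm_eq hde, sm_lt hbc]
    · rw [sm_lt hbc, sm_gt hde, sm_gt hde, sm_lt hbc]
  · subst hbc
    rcases lt_trichotomy d e with hde | hde | hde
    · rw [sm_eq rfl, sm_lt hde, sm_lt hde, sm_lt (lt_mul_inv_mul hde)]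
      simp [mul_assoc]
    · rw [sm_eq rfl, sm_eq hde, sm_eq hde, sm_eq rfl]
    · rw [sm_eq rfl, sm_gt hde, sm_gt hde, sm_eq rfl]
  · rcases lt_trichotomy d e with hde | hde | hde
    · rw [sm_gt hbc, sm_lt hde]
      rcases lt_trichotomy (b * c⁻¹ * d) e with h | h | h
      · rw [sm_lt h, sm_lt (mul_inv_mul_lt_iff.mp h)]
        exact Prod.ext (by group) rfl
      · rw [sm_eq h, sm_eq (mul_inv_mul_eq_iff.mp h)]
      · rw [sm_gt h,
          sm_gt (show e * d⁻¹ * c < b from mul_inv_mul_lt_iff.mpr (by simpa using h))]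
        exact Prod.ext rfl (by group)
    · subst hde
      have h1 : d < b * c⁻¹ * d := by
        have := mul_lt_mul_left hbc (c⁻¹ * d)
        simpa [mul_assoc] using this
      rw [sm_gt hbc, sm_gt h1, sm_eq rfl, sm_gt hbc]
      exact Prod.ext rfl (by group)
    · have h1 : e < b * c⁻¹ * d := by
        have h2 : d < b * c⁻¹ * d := by
          have := mul_lt_mul_left hbc (c⁻¹ * d)
          simpa [mul_assoc] using this
        exact hde.trans h2
      rw [sm_gt hbc, sm_gt h1, sm_gt hde, sm_gt hbc]
      exact Prod.ext rfl (by group)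

/-- The multiplication of `S_G` is associative; every `x = (a,b)` has `y = (b,a)` as its
unique "inverse" (`x·y·x = x` and `y·x·y = y`), so `S_G` is an inverse semigroup; and
`(g,h)` is idempotent iff `g = h`. -/
theorem stmt1 {G : Type*} [Group G] [LinearOrder G]
    [CovariantClass G G (· * ·) (· ≤ ·)]
    [CovariantClass G G (Function.swap (· * ·)) (· ≤ ·)] :
    (∀ x y z : G × G, Smul (Smul x y) z = Smul x (Smul y z)) ∧
    (∀ x : G × G,
      Smul (Smul x (x.2, x.1)) x = x ∧
      Smul (Smul (x.2, x.1) x) (x.2, x.1) = (x.2, x.1) ∧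
      ∀ y : G × G, Smul (Smul x y) x = x → Smul (Smul y x) y = y → y = (x.2, x.1)) ∧
    (∀ g h : G, Smul (g, h) (g, h) = (g, h) ↔ g = h) := by
  refine ⟨smul_assoc', ?_, ?_⟩
  · rintro ⟨a, b⟩
    refine ⟨by rw [sm_eq rfl, sm_eq rfl], by rw [sm_eq rfl, sm_eq rfl], ?_⟩
    rintro ⟨c, d⟩ h1 h2
    simp only at h1 h2 ⊢
    rcases lt_trichotomy b c with hbc | hbc | hbc
    · rw [sm_lt hbc] at h1
      rcases lt_trichotomy d a with hda | hda | hda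
      · rw [sm_lt hda] at h1
        have he : a * d⁻¹ * (c * b⁻¹ * a) = a := ((Prod.mk.injEq _ _ _ _).mp h1).1
        have he' : (a * d⁻¹ * c) * b⁻¹ * a = a := by simpa [mul_assoc] using he
        have hadc : a * d⁻¹ * c = b := cancel₁ he'
        have hc : c = d * a⁻¹ * b := by rw [← hadc]; group
        rw [hc] at hbc
        -- b < d * a⁻¹ * b ⇒ a < d
        have h3 : (1 : G) * b < (d * a⁻¹) * b := by simpa [mul_assoc] using hbc
        have h4 : (1 : G) < d * a⁻¹ := (mul_lt_mul_iff_right b).mp h3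
        have h5 : a < d := by
          have := mul_lt_mul_left h4 a
          simpa [mul_assoc] using this
        exact absurd hda h5.not_gt
      · rw [sm_eq hda] at h1
        have he : c * b⁻¹ * a = a := ((Prod.mk.injEq _ _ _ _).mp h1).1
        exact absurd (cancel₁ he).symm hbc.ne
      · rw [sm_gt hda] at h1
        have he : c * b⁻¹ * a = a := ((Prod.mk.injEq _ _ _ _).mp h1).1
        exact absurd (cancel₁ he).symm hbc.ne
    · subst hbc
      rw [sm_eq rfl] at h1
      rcases lt_trichotomy d a with hda | hda | hda
      · rw [sm_lt hda] at h1
        have he : a * d⁻¹ * a = a := ((Prod.mk.injEq _ _ _ _).mp h1).1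
        exact absurd (cancel₁ he) hda.ne'
      · exact Prod.ext rfl hda
      · rw [sm_gt hda] at h1
        have he : d * a⁻¹ * b = b := ((Prod.mk.injEq _ _ _ _).mp h1).2
        exact absurd (cancel₁ he) hda.ne'
    · rw [sm_gt hbc] at h1
      rcases lt_trichotomy (b * c⁻¹ * d) a with hta | hta | hta
      · rw [sm_lt hta] at h1
        have he : a * (b * c⁻¹ * d)⁻¹ * a = a := ((Prod.mk.injEq _ _ _ _).mp h1).1
        exact absurd (cancel₁ he) hta.ne'
      · -- b * c⁻¹ * d = a ; use the second hypothesis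
        have hd : d = c * b⁻¹ * a := by rw [← hta]; group
        have hda : d < a := by
          rw [hd]
          have := mul_lt_mul_left hbc (b⁻¹ * a)
          simpa [mul_assoc] using this
        rw [sm_lt hda] at h2
        have hyx : a * d⁻¹ * c = b := by rw [hd]; group
        rw [hyx, sm_gt hbc] at h2
        have : b = c := ((Prod.mk.injEq _ _ _ _).mp h2).1
        exact absurd this.symm hbc.ne
      · rw [sm_gt hta] at h1
        have he : b * c⁻¹ * d * a⁻¹ * b = b := ((Prod.mk.injEq _ _ _ _).mp h1).2
        exact absurd (cancel₁ he) hta.ne'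
  · intro g h
    constructor
    · intro he
      rcases lt_trichotomy h g with hh | hh | hh
      · rw [sm_lt hh] at he
        have h1 : g * h⁻¹ * g = g := ((Prod.mk.injEq _ _ _ _).mp he).1
        exact cancel₁ h1
      · exact hh.symm
      · rw [sm_gt hh] at he
        have h1 : h * g⁻¹ * h = h := ((Prod.mk.injEq _ _ _ _).mp he).2
        exact (cancel₁ h1).symm
    · rintro rfl
      rw [sm_eq rfl]
end

section
/- For a linearly ordered group G, the idempotents of the semigroup S_G are exactly the diagonal pairs (g,g); for idempotents, (g,g)·(h,h) = (h,h)·(g,g) = (g,g) holds if and only if h ≤ g in G; and the map (g,g) ↦ g is a multiplicative isomorphism from the set of idempotents of S_G (under the multiplication of S_G) onto G equipped with the binary operation max. In particular the idempotents of S_G form a linearly ordered semilattice. -/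
variable {G : Type*} [Group G] [LinearOrder G]
  [CovariantClass G G (· * ·) (· ≤ ·)] [CovariantClass G G (Function.swap (· * ·)) (· ≤ ·)]

lemma Smul_idem_iff (x : G × G) : Smul x x = x ↔ x.1 = x.2 := by
  obtain ⟨a, b⟩ := x
  simp only [Smul]
  constructor
  · intro h
    rcases lt_trichotomy b a with hlt | heq | hgt
    · simp only [hlt, if_pos] at h
      have := congrArg Prod.fst h
      simp at this
      exact absurd (mul_inv_eq_one.mp this) hlt.ne'
    · exact heq.symm
    · simp only [hgt.not_gt, if_neg, hgt.ne', if_neg, not_false_iff] at h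
      have := congrArg Prod.snd h
      simp at this
      exact absurd (mul_inv_eq_one.mp this) hgt.ne'
  · rintro rfl
    simp

lemma Smul_diag (g h : G) : Smul (g, g) (h, h) = (max g h, max g h) := by
  simp only [Smul]
  rcases lt_trichotomy g h with hlt | heq | hgt
  · simp [hlt, hlt.le, max_eq_right hlt.le, mul_assoc]
  · simp [heq]
  · simp [hgt.not_gt, hgt.ne', max_eq_left hgt.le, mul_assoc]

/-- The idempotents of `S_G` are exactly the diagonal pairs; `(g,g)·(h,h) = (h,h)·(g,g) = (g,g)`
iff `h ≤ g`; and `(g,g) ↦ g` is a multiplicative bijection from the idempotents of `S_G`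
onto `(G, max)`; in particular the idempotents form a linearly ordered semilattice. -/
theorem stmt2 {G : Type*} [Group G] [LinearOrder G]
    [CovariantClass G G (· * ·) (· ≤ ·)]
    [CovariantClass G G (Function.swap (· * ·)) (· ≤ ·)] :
    (∀ x : G × G, Smul x x = x ↔ x.1 = x.2) ∧
    (∀ g h : G, (Smul (g, g) (h, h) = (g, g) ∧ Smul (h, h) (g, g) = (g, g)) ↔ h ≤ g) ∧
    Function.Bijective (fun x : {x : G × G // Smul x x = x} => x.1.1) ∧
    (∀ x y : {x : G × G // Smul x x = x}, (Smul x.1 y.1).1 = max x.1.1 y.1.1) ∧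
    (∀ x y : {x : G × G // Smul x x = x},
      Smul x.1 y.1 = Smul y.1 x.1 ∧ (Smul x.1 y.1 = x.1 ∨ Smul x.1 y.1 = y.1)) := by
  have hdiag : ∀ x : {x : G × G // Smul x x = x}, x.1 = (x.1.1, x.1.1) := by
    intro x
    have := (Smul_idem_iff x.1).mp x.2
    exact Prod.ext rfl this.symm
  refine ⟨Smul_idem_iff, ?_, ⟨?_, ?_⟩, ?_, ?_⟩
  · intro g h
    rw [Smul_diag, Smul_diag]
    constructor
    · rintro ⟨h1, -⟩
      have := congrArg Prod.fst h1
      simp at this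
      exact this
    · intro hle
      simp [max_eq_left hle, max_eq_right hle, max_comm]
  · intro x y hxy
    simp only at hxy
    ext1
    rw [hdiag x, hdiag y, hxy]
  · intro g
    exact ⟨⟨(g, g), by simp [Smul]⟩, rfl⟩
  · intro x y
    rw [hdiag x, hdiag y, Smul_diag]
  · intro x y
    rw [hdiag x, hdiag y, Smul_diag, Smul_diag, max_comm]
    refine ⟨rfl, ?_⟩
    rcases le_total x.1.1 y.1.1 with h | h
    · right; simp [max_eq_left h]
    · left; simp [max_eq_right h]
end

section
/- For a linearly ordered group G and elements (a,b), (c,d) of the semigroup S_G: the principal right ideals satisfy R((a,b)) = R((c,d)) if and only if a = c; the principal left ideals satisfy L((a,b)) = L((c,d)) if and only if b = d; consequently R((a,b)) = R((c,d)) and L((a,b)) = L((c,d)) both hold if and only if (a,b) = (c,d), i.e. every 𝓗-class of S_G is a singleton. -/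
variable {G : Type*} [Group G] [LinearOrder G]
  [CovariantClass G G (· * ·) (· ≤ ·)] [CovariantClass G G (Function.swap (· * ·)) (· ≤ ·)]

/-- The principal right ideal `R(x) = {x} ∪ x·S` of `x` in the semigroup `(S, m)`. -/
def Rset {S : Type*} (m : S → S → S) (x : S) : Set S := {x} ∪ {y | ∃ s : S, y = m x s}

/-- The principal left ideal `L(x) = {x} ∪ S·x` of `x` in the semigroup `(S, m)`. -/
def Lset {S : Type*} (m : S → S → S) (x : S) : Set S := {x} ∪ {y | ∃ s : S, y = m s x}

lemma Rset_eq (a b : G) : Rset (Smul (G := G)) (a, b) = {p : G × G | a ≤ p.1} := by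
  ext ⟨x, y⟩
  simp only [Rset, Set.mem_union, Set.mem_singleton_iff, Set.mem_setOf_eq, Prod.mk.injEq]
  constructor
  · rintro (⟨h1, h2⟩ | ⟨⟨s1, s2⟩, hs⟩)
    · exact h1.ge
    · simp only [Smul] at hs
      split_ifs at hs with h1 h2 <;> simp only [Prod.mk.injEq] at hs
      · rw [hs.1]
        calc a = b * b⁻¹ * a := by group
        _ ≤ s1 * b⁻¹ * a := mul_le_mul_left (mul_le_mul_left h1.le _) _
      · exact hs.1.ge
      · exact hs.1.ge
  · intro hx
    rcases eq_or_lt_of_le hx with h | h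
    · right; exact ⟨(b, y), by simp [Smul, ← h]⟩
    · right
      refine ⟨(x * a⁻¹ * b, y), ?_⟩
      have hb : b < x * a⁻¹ * b := by
        have h1 : 1 < x * a⁻¹ := by rw [← div_eq_mul_inv]; exact one_lt_div'.mpr h
        calc b = 1 * b := (one_mul b).symm
        _ < x * a⁻¹ * b := mul_lt_mul_left h1 b
      simp only [Smul, hb, if_pos, Prod.mk.injEq]
      exact ⟨by group, trivial⟩

lemma Lset_eq (a b : G) : Lset (Smul (G := G)) (a, b) = {p : G × G | b ≤ p.2} := by
  ext ⟨x, y⟩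
  simp only [Lset, Set.mem_union, Set.mem_singleton_iff, Set.mem_setOf_eq, Prod.mk.injEq]
  constructor
  · rintro (⟨h1, h2⟩ | ⟨⟨s1, s2⟩, hs⟩)
    · exact h2.ge
    · simp only [Smul] at hs
      split_ifs at hs with h1 h2 <;> simp only [Prod.mk.injEq] at hs
      · exact hs.2.ge
      · exact hs.2.ge
      · rw [hs.2]
        have h3 : a < s2 := lt_of_le_of_ne (not_lt.mp h1) (Ne.symm h2)
        calc b = a * a⁻¹ * b := by group
        _ ≤ s2 * a⁻¹ * b := mul_le_mul_left (mul_le_mul_left h3.le _) _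
  · intro hy
    rcases eq_or_lt_of_le hy with h | h
    · right; exact ⟨(x, a), by simp [Smul, ← h]⟩
    · right
      refine ⟨(x, y * b⁻¹ * a), ?_⟩
      have ha : a < y * b⁻¹ * a := by
        have h1 : 1 < y * b⁻¹ := by rw [← div_eq_mul_inv]; exact one_lt_div'.mpr h
        calc a = 1 * a := (one_mul a).symm
        _ < y * b⁻¹ * a := mul_lt_mul_left h1 a
      simp only [Smul]
      rw [if_neg (not_lt.mpr ha.le), if_neg (ne_of_gt ha)]
      simp only [Prod.mk.injEq]
      exact ⟨trivial, by group⟩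

/-- In `S_G`: `R((a,b)) = R((c,d))` iff `a = c`; `L((a,b)) = L((c,d))` iff `b = d`;
and both hold iff `(a,b) = (c,d)`, i.e. every `𝓗`-class is a singleton. -/
theorem stmt3 {G : Type*} [Group G] [LinearOrder G]
    [CovariantClass G G (· * ·) (· ≤ ·)]
    [CovariantClass G G (Function.swap (· * ·)) (· ≤ ·)] (a b c d : G) :
    (Rset (Smul (G := G)) (a, b) = Rset (Smul (G := G)) (c, d) ↔ a = c) ∧
    (Lset (Smul (G := G)) (a, b) = Lset (Smul (G := G)) (c, d) ↔ b = d) ∧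
    ((Rset (Smul (G := G)) (a, b) = Rset (Smul (G := G)) (c, d) ∧
      Lset (Smul (G := G)) (a, b) = Lset (Smul (G := G)) (c, d)) ↔
        ((a, b) : G × G) = (c, d)) := by
  have hR : ∀ (u v w z : G), Rset (Smul (G := G)) (u, v) = Rset (Smul (G := G)) (w, z) ↔ u = w := by
    intro u v w z
    rw [Rset_eq, Rset_eq]
    constructor
    · intro h
      have h1 : (w, z) ∈ {p : G × G | u ≤ p.1} := h ▸ le_refl w
      have h2 : (u, v) ∈ {p : G × G | w ≤ p.1} := h ▸ le_refl u
      exact le_antisymm h1 h2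
    · rintro rfl; rfl
  have hL : ∀ (u v w z : G), Lset (Smul (G := G)) (u, v) = Lset (Smul (G := G)) (w, z) ↔ v = z := by
    intro u v w z
    rw [Lset_eq, Lset_eq]
    constructor
    · intro h
      have h1 : (w, z) ∈ {p : G × G | v ≤ p.2} := h ▸ le_refl z
      have h2 : (u, v) ∈ {p : G × G | z ≤ p.2} := h ▸ le_refl v
      exact le_antisymm h1 h2
    · rintro rfl; rfl
  refine ⟨hR a b c d, hL a b c d, ?_⟩
  rw [hR, hL, Prod.mk.injEq]
end

section
/- For a linearly ordered group G, the semigroup S_G is simple and bisimple: for all x, y ∈ S_G there exist u, v ∈ S_G with u·x·v = y, and there exists z ∈ S_G with L(x) = L(z) and R(z) = R(y) (i.e. any two elements of S_G are 𝓓-equivalent). The same holds for the semigroup S_G⁺ on the positive cone. -/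
variable {G : Type*} [Group G] [LinearOrder G]
  [CovariantClass G G (· * ·) (· ≤ ·)] [CovariantClass G G (Function.swap (· * ·)) (· ≤ ·)]

/-- The carrier of the semigroup `S_G⁺` on the positive cone `G⁺ = {x | 1 ≤ x}`. -/
abbrev PosS (G : Type*) [Group G] [LinearOrder G] : Type _ :=
  {p : G × G // 1 ≤ p.1 ∧ 1 ≤ p.2}

theorem smul_mem {x y : G × G} (hx : 1 ≤ x.1 ∧ 1 ≤ x.2) (hy : 1 ≤ y.1 ∧ 1 ≤ y.2) :
    1 ≤ (Smul x y).1 ∧ 1 ≤ (Smul x y).2 := by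
  unfold Smul
  split_ifs with h1 h2
  · refine ⟨?_, hy.2⟩
    have h3 : (1 : G) ≤ y.1 * x.2⁻¹ := by
      have h4 := mul_le_mul_left h1.le x.2⁻¹
      rwa [mul_inv_cancel] at h4
    exact one_le_mul h3 hx.1
  · exact ⟨hx.1, hy.2⟩
  · refine ⟨hx.1, ?_⟩
    have h3 : (1 : G) ≤ x.2 * y.1⁻¹ := by
      have h4 := mul_le_mul_left (not_lt.mp h1) y.1⁻¹
      rwa [mul_inv_cancel] at h4
    exact one_le_mul h3 hy.2

/-- The multiplication of the semigroup `S_G⁺`. -/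
def SmulP (x y : PosS G) : PosS G := ⟨Smul x.1 y.1, smul_mem x.2 y.2⟩

lemma smul_eq_left (a b c : G) : Smul (a, b) (b, c) = (a, c) := by
  simp [Smul]

lemma mem_Lset_iff (x p : G × G) : p ∈ Lset (Smul (G := G)) x ↔ x.2 ≤ p.2 := by
  constructor
  · rintro (rfl | ⟨s, rfl⟩)
    · exact le_refl _
    · unfold Smul
      split_ifs with h1 h2
      · exact le_refl _
      · exact le_refl _
      · push_neg at h1
        have h3 : (1 : G) ≤ s.2 * x.1⁻¹ := by
          have := mul_le_mul_left h1 x.1⁻¹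
          rwa [mul_inv_cancel] at this
        calc x.2 = 1 * x.2 := (one_mul _).symm
          _ ≤ s.2 * x.1⁻¹ * x.2 := mul_le_mul_left h3 _
  · intro h
    rcases eq_or_lt_of_le h with heq | hlt
    · right
      refine ⟨(p.1, x.1), ?_⟩
      have : Smul (p.1, x.1) x = (p.1, x.2) := by
        show Smul (p.1, x.1) (x.1, x.2) = _
        exact smul_eq_left _ _ _
      rw [this, Prod.ext_iff]
      exact ⟨rfl, heq.symm⟩
    · right
      refine ⟨(p.1, p.2 * x.2⁻¹ * x.1), ?_⟩
      have hgt : (1 : G) < p.2 * x.2⁻¹ := by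
        have := mul_lt_mul_left hlt x.2⁻¹
        rwa [mul_inv_cancel] at this
      have hcond : x.1 < p.2 * x.2⁻¹ * x.1 := by
        calc x.1 = 1 * x.1 := (one_mul _).symm
          _ < p.2 * x.2⁻¹ * x.1 := mul_lt_mul_left hgt _
      unfold Smul
      rw [if_neg (not_lt.mpr hcond.le), if_neg hcond.ne']
      simp [mul_assoc]

lemma mem_Rset_iff (x p : G × G) : p ∈ Rset (Smul (G := G)) x ↔ x.1 ≤ p.1 := by
  constructor
  · rintro (rfl | ⟨s, rfl⟩)
    · exact le_refl _
    · unfold Smul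
      split_ifs with h1 h2
      · have h3 : (1 : G) ≤ s.1 * x.2⁻¹ := by
          have := mul_le_mul_left h1.le x.2⁻¹
          rwa [mul_inv_cancel] at this
        calc x.1 = 1 * x.1 := (one_mul _).symm
          _ ≤ s.1 * x.2⁻¹ * x.1 := mul_le_mul_left h3 _
      · exact le_refl _
      · exact le_refl _
  · intro h
    rcases eq_or_lt_of_le h with heq | hlt
    · right
      refine ⟨(x.2, p.2), ?_⟩
      have : Smul x (x.2, p.2) = (x.1, p.2) := by
        have := smul_eq_left x.1 x.2 p.2
        simpa using this
      rw [this, Prod.ext_iff]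
      exact ⟨heq.symm, rfl⟩
    · right
      refine ⟨(p.1 * x.1⁻¹ * x.2, p.2), ?_⟩
      have hgt : (1 : G) < p.1 * x.1⁻¹ := by
        have := mul_lt_mul_left hlt x.1⁻¹
        rwa [mul_inv_cancel] at this
      have hcond : x.2 < p.1 * x.1⁻¹ * x.2 := by
        calc x.2 = 1 * x.2 := (one_mul _).symm
          _ < p.1 * x.1⁻¹ * x.2 := mul_lt_mul_left hgt _
      unfold Smul
      rw [if_pos hcond]
      simp [mul_assoc]

lemma mem_LsetP_iff (x p : PosS G) : p ∈ Lset (SmulP (G := G)) x ↔ x.1.2 ≤ p.1.2 := by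
  constructor
  · rintro (rfl | ⟨s, rfl⟩)
    · exact le_refl _
    · show x.1.2 ≤ (Smul s.1 x.1).2
      unfold Smul
      split_ifs with h1 h2
      · exact le_refl _
      · exact le_refl _
      · push_neg at h1
        have h3 : (1 : G) ≤ s.1.2 * x.1.1⁻¹ := by
          have := mul_le_mul_left h1 x.1.1⁻¹
          rwa [mul_inv_cancel] at this
        calc x.1.2 = 1 * x.1.2 := (one_mul _).symm
          _ ≤ s.1.2 * x.1.1⁻¹ * x.1.2 := mul_le_mul_left h3 _
  · intro h
    rcases eq_or_lt_of_le h with heq | hlt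
    · right
      refine ⟨⟨(p.1.1, x.1.1), ⟨p.2.1, x.2.1⟩⟩, ?_⟩
      apply Subtype.ext
      show p.1 = Smul (p.1.1, x.1.1) x.1
      have : Smul (p.1.1, x.1.1) (x.1.1, x.1.2) = (p.1.1, x.1.2) := smul_eq_left _ _ _
      simp only [show (x.1.1, x.1.2) = x.1 from rfl] at this
      rw [this, Prod.ext_iff]
      exact ⟨rfl, heq.symm⟩
    · right
      have hgt : (1 : G) < p.1.2 * x.1.2⁻¹ := by
        have := mul_lt_mul_left hlt x.1.2⁻¹
        rwa [mul_inv_cancel] at this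
      have hpos : (1 : G) ≤ p.1.2 * x.1.2⁻¹ * x.1.1 :=
        one_le_mul hgt.le x.2.1
      refine ⟨⟨(p.1.1, p.1.2 * x.1.2⁻¹ * x.1.1), ⟨p.2.1, hpos⟩⟩, ?_⟩
      apply Subtype.ext
      show p.1 = Smul (p.1.1, p.1.2 * x.1.2⁻¹ * x.1.1) x.1
      have hcond : x.1.1 < p.1.2 * x.1.2⁻¹ * x.1.1 := by
        calc x.1.1 = 1 * x.1.1 := (one_mul _).symm
          _ < p.1.2 * x.1.2⁻¹ * x.1.1 := mul_lt_mul_left hgt _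
      unfold Smul
      rw [if_neg (not_lt.mpr hcond.le), if_neg hcond.ne']
      simp [mul_assoc]

lemma mem_RsetP_iff (x p : PosS G) : p ∈ Rset (SmulP (G := G)) x ↔ x.1.1 ≤ p.1.1 := by
  constructor
  · rintro (rfl | ⟨s, rfl⟩)
    · exact le_refl _
    · show x.1.1 ≤ (Smul x.1 s.1).1
      unfold Smul
      split_ifs with h1 h2
      · have h3 : (1 : G) ≤ s.1.1 * x.1.2⁻¹ := by
          have := mul_le_mul_left h1.le x.1.2⁻¹
          rwa [mul_inv_cancel] at this
        calc x.1.1 = 1 * x.1.1 := (one_mul _).symm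
          _ ≤ s.1.1 * x.1.2⁻¹ * x.1.1 := mul_le_mul_left h3 _
      · exact le_refl _
      · exact le_refl _
  · intro h
    rcases eq_or_lt_of_le h with heq | hlt
    · right
      refine ⟨⟨(x.1.2, p.1.2), ⟨x.2.2, p.2.2⟩⟩, ?_⟩
      apply Subtype.ext
      show p.1 = Smul x.1 (x.1.2, p.1.2)
      have : Smul (x.1.1, x.1.2) (x.1.2, p.1.2) = (x.1.1, p.1.2) := smul_eq_left _ _ _
      simp only [show (x.1.1, x.1.2) = x.1 from rfl] at this
      rw [this, Prod.ext_iff]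
      exact ⟨heq.symm, rfl⟩
    · right
      have hgt : (1 : G) < p.1.1 * x.1.1⁻¹ := by
        have := mul_lt_mul_left hlt x.1.1⁻¹
        rwa [mul_inv_cancel] at this
      have hpos : (1 : G) ≤ p.1.1 * x.1.1⁻¹ * x.1.2 :=
        one_le_mul hgt.le x.2.2
      refine ⟨⟨(p.1.1 * x.1.1⁻¹ * x.1.2, p.1.2), ⟨hpos, p.2.2⟩⟩, ?_⟩
      apply Subtype.ext
      show p.1 = Smul x.1 (p.1.1 * x.1.1⁻¹ * x.1.2, p.1.2)
      have hcond : x.1.2 < p.1.1 * x.1.1⁻¹ * x.1.2 := by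
        calc x.1.2 = 1 * x.1.2 := (one_mul _).symm
          _ < p.1.1 * x.1.1⁻¹ * x.1.2 := mul_lt_mul_left hgt _
      unfold Smul
      rw [if_pos hcond]
      simp [mul_assoc]

/-- `S_G` and `S_G⁺` are simple (`∀ x y, ∃ u v, u·x·v = y`) and bisimple
(any two elements are `𝓓`-equivalent). -/
theorem stmt4 {G : Type*} [Group G] [LinearOrder G]
    [CovariantClass G G (· * ·) (· ≤ ·)]
    [CovariantClass G G (Function.swap (· * ·)) (· ≤ ·)] :
    (∀ x y : G × G, ∃ u v : G × G, Smul (Smul u x) v = y) ∧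
    (∀ x y : G × G, ∃ z : G × G,
      Lset (Smul (G := G)) x = Lset (Smul (G := G)) z ∧
      Rset (Smul (G := G)) z = Rset (Smul (G := G)) y) ∧
    (∀ x y : PosS G, ∃ u v : PosS G, SmulP (SmulP u x) v = y) ∧
    (∀ x y : PosS G, ∃ z : PosS G,
      Lset (SmulP (G := G)) x = Lset (SmulP (G := G)) z ∧
      Rset (SmulP (G := G)) z = Rset (SmulP (G := G)) y) := by
  refine ⟨?_, ?_, ?_, ?_⟩
  · intro x y
    refine ⟨(y.1, x.1), (x.2, y.2), ?_⟩
    have h1 : Smul (y.1, x.1) x = (y.1, x.2) := by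
      have := smul_eq_left y.1 x.1 x.2
      simpa using this
    rw [h1]
    simpa using smul_eq_left y.1 x.2 y.2
  · intro x y
    refine ⟨(y.1, x.2), ?_, ?_⟩
    · ext p; rw [mem_Lset_iff, mem_Lset_iff]
    · ext p; rw [mem_Rset_iff, mem_Rset_iff]
  · intro x y
    refine ⟨⟨(y.1.1, x.1.1), ⟨y.2.1, x.2.1⟩⟩, ⟨(x.1.2, y.1.2), ⟨x.2.2, y.2.2⟩⟩, ?_⟩
    apply Subtype.ext
    show Smul (Smul (y.1.1, x.1.1) x.1) (x.1.2, y.1.2) = y.1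
    have h1 : Smul (y.1.1, x.1.1) x.1 = (y.1.1, x.1.2) := by
      have := smul_eq_left y.1.1 x.1.1 x.1.2
      simpa using this
    rw [h1]
    simpa using smul_eq_left y.1.1 x.1.2 y.1.2
  · intro x y
    refine ⟨⟨(y.1.1, x.1.2), ⟨y.2.1, x.2.2⟩⟩, ?_, ?_⟩
    · ext p; rw [mem_LsetP_iff, mem_LsetP_iff]
    · ext p; rw [mem_RsetP_iff, mem_RsetP_iff]
end

section
/- Let G be a linearly ordered group and g, h ∈ G with g < h. Then the subsemigroup of S_G generated by the two elements (g,h) and (h,g) is isomorphic (as a semigroup) to the bicyclic semigroup, realized as ℕ × ℕ with multiplication (k,l)·(m,n) = (k + m − min(l,m), l + n − min(l,m)); under this isomorphism the idempotent (g,g) corresponds to (0,0) and is a two-sided identity element of this subsemigroup. -/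
set_option linter.unusedSectionVars false

variable {G : Type*} [Group G] [LinearOrder G]
  [CovariantClass G G (· * ·) (· ≤ ·)] [CovariantClass G G (Function.swap (· * ·)) (· ≤ ·)]

/-- The multiplication of the bicyclic semigroup on `ℕ × ℕ`:
`(k,l)·(m,n) = (k + m − min(l,m), l + n − min(l,m))`. -/
def Bmul (x y : ℕ × ℕ) : ℕ × ℕ :=
  (x.1 + y.1 - min x.2 y.1, x.2 + y.2 - min x.2 y.1)

/-- The subsemigroup of `(S, m)` generated by the two elements `x` and `y`. -/
inductive Gen {S : Type*} (m : S → S → S) (x y : S) : S → Prop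
  | fst : Gen m x y x
  | snd : Gen m x y y
  | mul {a b : S} : Gen m x y a → Gen m x y b → Gen m x y (m a b)

/-- Auxiliary: `ff g h n = (h g⁻¹)^n g`. -/
def ff (g h : G) (n : ℕ) : G := (h * g⁻¹) ^ n * g

lemma ff_strictMono {g h : G} (hgh : g < h) : StrictMono (ff g h) := by
  intro n m hnm
  have ht : (1 : G) < h * g⁻¹ := by
    have := mul_lt_mul_left hgh g⁻¹
    simpa using this
  exact mul_lt_mul_left (pow_lt_pow_right' ht hnm) g

lemma ff_cancel {g h : G} {l m : ℕ} (hlm : l ≤ m) (k : ℕ) :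
    ff g h m * (ff g h l)⁻¹ * ff g h k = ff g h (m - l + k) := by
  unfold ff
  rw [pow_add, pow_sub _ hlm]
  simp [mul_assoc]

lemma smul_ff {g h : G} (hgh : g < h) (k l m n : ℕ) :
    Smul (ff g h k, ff g h l) (ff g h m, ff g h n) =
      (ff g h (k + m - min l m), ff g h (l + n - min l m)) := by
  rcases lt_trichotomy l m with hc | hc | hc
  · have : ff g h l < ff g h m := ff_strictMono hgh hc
    simp only [Smul, this, if_pos]
    rw [ff_cancel hc.le]
    congr 2 <;> omega
  · subst hc
    simp only [Smul, lt_irrefl, if_neg, if_pos, ite_true, ite_false]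
    congr 2 <;> omega
  · have h1 : ¬ ff g h l < ff g h m := not_lt.2 (ff_strictMono hgh hc).le
    have h2 : ff g h l ≠ ff g h m := ((ff_strictMono hgh).injective.ne_iff).2 (by omega)
    simp only [Smul, if_neg h1, if_neg h2]
    rw [ff_cancel hc.le]
    congr 2 <;> omega

lemma ff_zero (g h : G) : ff g h 0 = g := by simp [ff]

lemma ff_one (g h : G) : ff g h 1 = h := by simp [ff]

lemma gen_ff {g h : G} (hgh : g < h) (k l : ℕ) :
    Gen (Smul (G := G)) (g, h) (h, g) (ff g h k, ff g h l) := by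
  have hp : Gen (Smul (G := G)) (g, h) (h, g) (ff g h 0, ff g h 1) := by
    rw [ff_zero, ff_one]; exact Gen.fst
  have hq : Gen (Smul (G := G)) (g, h) (h, g) (ff g h 1, ff g h 0) := by
    rw [ff_zero, ff_one]; exact Gen.snd
  have hq' : ∀ k, Gen (Smul (G := G)) (g, h) (h, g) (ff g h (k + 1), ff g h 0) := by
    intro k
    induction k with
    | zero => exact hq
    | succ k ih =>
      have := Gen.mul hq ih
      rwa [smul_ff hgh, show 1 + (k+1) - min 0 (k+1) = k + 1 + 1 by omega,
        show 0 + 0 - min 0 (k+1) = 0 by omega] at this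
  have hp' : ∀ l, Gen (Smul (G := G)) (g, h) (h, g) (ff g h 0, ff g h (l + 1)) := by
    intro l
    induction l with
    | zero => exact hp
    | succ l ih =>
      have := Gen.mul ih hp
      rwa [smul_ff hgh, show 0 + 0 - min (l+1) 0 = 0 by omega,
        show l + 1 + 1 - min (l+1) 0 = l + 1 + 1 by omega] at this
  match k, l with
  | 0, 0 =>
    have := Gen.mul hp hq
    rw [smul_ff hgh] at this
    simpa using this
  | 0, l + 1 => exact hp' l
  | k + 1, 0 => exact hq' k
  | k + 1, l + 1 =>
    have := Gen.mul (hq' k) (hp' l)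
    rwa [smul_ff hgh, show k + 1 + 0 - min 0 0 = k + 1 by omega,
      show 0 + (l + 1) - min 0 0 = l + 1 by omega] at this

lemma gen_classify {g h : G} (hgh : g < h) {z : G × G}
    (hz : Gen (Smul (G := G)) (g, h) (h, g) z) :
    ∃ k l : ℕ, z = (ff g h k, ff g h l) := by
  induction hz with
  | fst => exact ⟨0, 1, by rw [ff_zero, ff_one]⟩
  | snd => exact ⟨1, 0, by rw [ff_zero, ff_one]⟩
  | mul ha hb iha ihb =>
    obtain ⟨k, l, rfl⟩ := iha
    obtain ⟨m, n, rfl⟩ := ihb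
    exact ⟨_, _, smul_ff hgh k l m n⟩

/-- For `g < h` in `G`, the subsemigroup of `S_G` generated by `(g,h)` and `(h,g)` is
isomorphic to the bicyclic semigroup; under this isomorphism the idempotent `(g,g)`
corresponds to `(0,0)`, and `(g,g)` is a two-sided identity of this subsemigroup. -/
theorem stmt5 {G : Type*} [Group G] [LinearOrder G]
    [CovariantClass G G (· * ·) (· ≤ ·)]
    [CovariantClass G G (Function.swap (· * ·)) (· ≤ ·)] (g h : G) (hgh : g < h) :
    Gen (Smul (G := G)) (g, h) (h, g) (g, g) ∧
    ∃ e : {z : G × G // Gen (Smul (G := G)) (g, h) (h, g) z} ≃ ℕ × ℕ,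
      (∀ a b : {z : G × G // Gen (Smul (G := G)) (g, h) (h, g) z},
        e ⟨Smul a.1 b.1, Gen.mul a.2 b.2⟩ = Bmul (e a) (e b)) ∧
      (∀ hm : Gen (Smul (G := G)) (g, h) (h, g) (g, g), e ⟨(g, g), hm⟩ = (0, 0)) ∧
      (∀ z : {z : G × G // Gen (Smul (G := G)) (g, h) (h, g) z},
        Smul (g, g) z.1 = z.1 ∧ Smul z.1 (g, g) = z.1) := by
  have hgg : Gen (Smul (G := G)) (g, h) (h, g) (g, g) := by
    have := gen_ff hgh 0 0
    rwa [ff_zero] at this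
  refine ⟨hgg, ?_⟩
  set F : ℕ × ℕ → {z : G × G // Gen (Smul (G := G)) (g, h) (h, g) z} :=
    fun u => ⟨(ff g h u.1, ff g h u.2), gen_ff hgh u.1 u.2⟩ with hF
  have hinj : Function.Injective F := by
    intro u v huv
    have h1 := congrArg (fun w => w.1.1) huv
    have h2 := congrArg (fun w => w.1.2) huv
    simp only [hF] at h1 h2
    have e1 := (ff_strictMono (g := g) (h := h) hgh).injective h1
    have e2 := (ff_strictMono (g := g) (h := h) hgh).injective h2
    exact Prod.ext e1 e2
  have hsurj : Function.Surjective F := by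
    rintro ⟨z, hz⟩
    obtain ⟨k, l, rfl⟩ := gen_classify hgh hz
    exact ⟨(k, l), rfl⟩
  have hbij : Function.Bijective F := ⟨hinj, hsurj⟩
  refine ⟨(Equiv.ofBijective F hbij).symm, ?_, ?_, ?_⟩
  · intro a b
    set e := (Equiv.ofBijective F hbij).symm with he
    have hFa : F (e a) = a := (Equiv.ofBijective F hbij).apply_symm_apply a
    have hFb : F (e b) = b := (Equiv.ofBijective F hbij).apply_symm_apply b
    have : F (Bmul (e a) (e b)) = ⟨Smul a.1 b.1, Gen.mul a.2 b.2⟩ := by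
      apply Subtype.ext
      have ha1 : a.1 = (ff g h (e a).1, ff g h (e a).2) :=
        congrArg Subtype.val hFa.symm
      have hb1 : b.1 = (ff g h (e b).1, ff g h (e b).2) :=
        congrArg Subtype.val hFb.symm
      simp only [hF]
      rw [ha1, hb1, smul_ff hgh]
      rfl
    rw [← this]
    exact (Equiv.ofBijective F hbij).symm_apply_apply _
  · intro hm
    have : F (0, 0) = ⟨(g, g), hm⟩ := by
      apply Subtype.ext
      simp only [hF]
      rw [ff_zero]
    rw [← this]
    exact (Equiv.ofBijective F hbij).symm_apply_apply _
  · rintro ⟨z, hz⟩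
    obtain ⟨k, l, rfl⟩ := gen_classify hgh hz
    constructor
    · have : Smul (ff g h 0, ff g h 0) (ff g h k, ff g h l) = (ff g h k, ff g h l) := by
        rw [smul_ff hgh]
        congr 2 <;> omega
      rwa [ff_zero] at this
    · have : Smul (ff g h k, ff g h l) (ff g h 0, ff g h 0) = (ff g h k, ff g h l) := by
        rw [smul_ff hgh]
        congr 2 <;> omega
      rwa [ff_zero] at this
end

section
/- Let G be an archimedean linearly ordered group. Then every non-trivial congruence on the semigroup S_G⁺ is a group congruence. -/
variable {G : Type*} [Group G] [LinearOrder G]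
  [CovariantClass G G (· * ·) (· ≤ ·)] [CovariantClass G G (Function.swap (· * ·)) (· ≤ ·)]

/-- `c` is a congruence on the semigroup `(S, m)` : an equivalence relation compatible
with multiplication on both sides. -/
def IsSgCongruence {S : Type*} (m : S → S → S) (c : S → S → Prop) : Prop :=
  Equivalence c ∧ ∀ x y s : S, c x y → c (m s x) (m s y) ∧ c (m x s) (m y s)

/-- `c` differs from both the identity relation and the universal relation. -/
def IsNontrivialRel {S : Type*} (c : S → S → Prop) : Prop :=
  (∃ x y : S, c x y ∧ x ≠ y) ∧ ∃ x y : S, ¬c x y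

/-- The quotient of the semigroup `(S, m)` by the congruence `c` is a group:
there is a class acting as a two-sided identity and every class has a two-sided inverse. -/
def IsGroupCongruence {S : Type*} (m : S → S → S) (c : S → S → Prop) : Prop :=
  ∃ e : S, (∀ x : S, c (m e x) x ∧ c (m x e) x) ∧ ∀ x : S, ∃ y : S, c (m x y) e ∧ c (m y x) e

/-- A linearly ordered group is archimedean if for all `1 < a` and `1 < b` there are
positive integers `m`, `n` with `b ≤ a ^ m` and `a ≤ b ^ n`. -/
def IsArchGroup (G : Type*) [Group G] [LinearOrder G] : Prop :=
  ∀ a b : G, 1 < a → 1 < b →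
    (∃ m : ℕ, 0 < m ∧ b ≤ a ^ m) ∧ ∃ n : ℕ, 0 < n ∧ a ≤ b ^ n

/-- The identity element `(1,1)` of `S_G⁺`. -/
def eP : PosS G := ⟨(1, 1), le_refl 1, le_refl 1⟩

/-- The diagonal element `(t,t)` of `S_G⁺`. -/
def diagP (t : G) (ht : 1 ≤ t) : PosS G := ⟨(t, t), ht, ht⟩

lemma smul_lt' {a b c d : G} (h : b < c) : Smul (a, b) (c, d) = (c * b⁻¹ * a, d) := by
  simp [Smul, h]

lemma smul_eq'' {a b c d : G} (h : b = c) : Smul (a, b) (c, d) = (a, d) := by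
  simp [Smul, h]

lemma smul_gt' {a b c d : G} (h : c < b) : Smul (a, b) (c, d) = (a, b * c⁻¹ * d) := by
  simp [Smul, h.not_gt, h.ne']

lemma one_lt_mulinv {p q : G} (h : p < q) : 1 < q * p⁻¹ := by
  have := mul_lt_mul_left h p⁻¹
  rwa [mul_inv_cancel] at this

lemma one_le_pow'' {t : G} (ht : 1 ≤ t) (n : ℕ) : 1 ≤ t ^ n := by
  induction n with
  | zero => simp
  | succ k ih => rw [pow_succ]; exact one_le_mul ih ht

lemma one_smulP (x : PosS G) : SmulP eP x = x := by
  obtain ⟨⟨a, b⟩, ha, hb⟩ := x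
  apply Subtype.ext
  show Smul (1, 1) (a, b) = (a, b)
  rcases ha.lt_or_eq with h | h
  · rw [smul_lt' h]; simp
  · subst h; rw [smul_eq'' rfl]

lemma smulP_one (x : PosS G) : SmulP x eP = x := by
  obtain ⟨⟨a, b⟩, ha, hb⟩ := x
  apply Subtype.ext
  show Smul (a, b) (1, 1) = (a, b)
  rcases hb.lt_or_eq with h | h
  · rw [smul_gt' h]; simp
  · subst h; rw [smul_eq'' rfl]

lemma ne_eP_of {w : PosS G} {u v : G} (h : w.1 = (u, v)) (huv : 1 < u ∨ 1 < v) :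
    w ≠ eP := by
  intro hEq
  rw [hEq] at h
  simp only [eP, Prod.ext_iff] at h
  rcases huv with hu | hv
  · exact hu.ne' h.1.symm
  · exact hv.ne' h.2.symm

lemma ccast (c : PosS G → PosS G → Prop) {s s' : G} {hs : 1 ≤ s} {hs' : 1 ≤ s'}
    (he : s = s') (h : c eP (diagP s hs)) : c eP (diagP s' hs') := by
  subst he; exact h

lemma exists_ne_aux (c : PosS G → PosS G → Prop)
    (hcon : IsSgCongruence (SmulP (G := G)) c) {x y : PosS G} (hxy : c x y)
    (hne : x ≠ y) (hle : x.1.1 ≤ y.1.1) : ∃ w : PosS G, c eP w ∧ w ≠ eP := by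
  obtain ⟨hr, hm⟩ := hcon
  obtain ⟨⟨a, b⟩, ha, hb⟩ := x
  obtain ⟨⟨a', b'⟩, ha', hb'⟩ := y
  have hle' : a ≤ a' := hle
  set L : PosS G := ⟨(1, a), le_refl 1, ha⟩ with hL
  set R : PosS G := ⟨(b, 1), hb, le_refl 1⟩ with hR
  have h1 := (hm _ _ L hxy).1
  have h2 := (hm _ _ R h1).2
  have hLx : SmulP L ⟨(a, b), ha, hb⟩ = ⟨(1, b), le_refl 1, hb⟩ :=
    Subtype.ext (smul_eq'' rfl)
  have hLxR : SmulP (⟨(1, b), le_refl 1, hb⟩ : PosS G) R = eP :=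
    Subtype.ext (smul_eq'' rfl)
  rw [hLx, hLxR] at h2
  refine ⟨_, h2, ?_⟩
  rcases hle'.lt_or_eq with hlt | heq
  · -- a < a'
    have hA : (1 : G) < a' * a⁻¹ * 1 := by simpa using one_lt_mulinv hlt
    have hLy : SmulP L ⟨(a', b'), ha', hb'⟩ = ⟨(a' * a⁻¹ * 1, b'), hA.le, hb'⟩ :=
      Subtype.ext (smul_lt' hlt)
    rw [hLy]
    rcases lt_trichotomy b' b with h | h | h
    · refine ne_eP_of (u := b * b'⁻¹ * (a' * a⁻¹ * 1)) (v := 1) ?_ ?_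
      · exact smul_lt' h
      · exact Or.inl ((one_lt_mulinv h).trans_le (le_mul_of_one_le_right' hA.le))
    · refine ne_eP_of (u := a' * a⁻¹ * 1) (v := 1) ?_ (Or.inl hA)
      exact smul_eq'' h
    · refine ne_eP_of (u := a' * a⁻¹ * 1) (v := b' * b⁻¹ * 1) ?_ (Or.inl hA)
      exact smul_gt' h
  · -- a = a'
    subst heq
    have hbb : b ≠ b' := by
      intro hb0
      exact hne (Subtype.ext (by show ((a, b) : G × G) = (a, b'); rw [hb0]))
    have hLy : SmulP L ⟨(a, b'), ha', hb'⟩ = ⟨(1, b'), le_refl 1, hb'⟩ :=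
      Subtype.ext (smul_eq'' rfl)
    rw [hLy]
    rcases hbb.lt_or_gt with h | h
    · refine ne_eP_of (u := 1) (v := b' * b⁻¹ * 1) ?_ ?_
      · exact smul_gt' h
      · exact Or.inr (by simpa using one_lt_mulinv h)
    · refine ne_eP_of (u := b * b'⁻¹ * 1) (v := 1) ?_ ?_
      · exact smul_lt' h
      · exact Or.inl (by simpa using one_lt_mulinv h)

lemma exists_ne_eP (c : PosS G → PosS G → Prop)
    (hcon : IsSgCongruence (SmulP (G := G)) c) (hnt : IsNontrivialRel c) :
    ∃ w : PosS G, c eP w ∧ w ≠ eP := by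
  obtain ⟨⟨x, y, hxy, hne⟩, -⟩ := hnt
  rcases le_total x.1.1 y.1.1 with h | h
  · exact exists_ne_aux c hcon hxy hne h
  · exact exists_ne_aux c hcon (hcon.1.symm hxy) (Ne.symm hne) h

lemma shrink (c : PosS G → PosS G → Prop)
    (hcon : IsSgCongruence (SmulP (G := G)) c) {p q : G} {hp : 1 ≤ p} {hq : 1 ≤ q}
    (hpq : p < q) (h : c (diagP p hp) (diagP q hq)) :
    ∃ t : G, ∃ ht : 1 < t, c eP (diagP t ht.le) := by
  obtain ⟨hr, hm⟩ := hcon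
  set L : PosS G := ⟨(1, p), le_refl 1, hp⟩ with hL
  set R : PosS G := ⟨(p, 1), hp, le_refl 1⟩ with hR
  have h1 := (hm _ _ L h).1
  have h2 := (hm _ _ R h1).2
  have hA : (1 : G) < q * p⁻¹ * 1 := by simpa using one_lt_mulinv hpq
  have e1 : SmulP L (diagP p hp) = L := Subtype.ext (smul_eq'' rfl)
  have e2 : SmulP L R = eP := Subtype.ext (smul_eq'' rfl)
  have e3 : SmulP L (diagP q hq) = ⟨(q * p⁻¹ * 1, q), hA.le, hq⟩ :=
    Subtype.ext (smul_lt' hpq)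
  have e4 : SmulP (⟨(q * p⁻¹ * 1, q), hA.le, hq⟩ : PosS G) R = diagP (q * p⁻¹ * 1) hA.le :=
    Subtype.ext (by
      show Smul (q * p⁻¹ * 1, q) (p, 1) = ((q * p⁻¹ * 1, q * p⁻¹ * 1) : G × G)
      rw [smul_gt' hpq])
  rw [e1, e2, e3, e4] at h2
  exact ⟨_, hA, h2⟩

lemma exists_diag (c : PosS G → PosS G → Prop)
    (hcon : IsSgCongruence (SmulP (G := G)) c) (hnt : IsNontrivialRel c) :
    ∃ t : G, ∃ ht : 1 < t, c eP (diagP t ht.le) := by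
  obtain ⟨w, hcw, hwne⟩ := exists_ne_eP c hcon hnt
  obtain ⟨hr, hm⟩ := id hcon
  obtain ⟨⟨u, v⟩, hu, hv⟩ := w
  set z : PosS G := ⟨(v, u), hv, hu⟩ with hz
  have h1 := (hm _ _ z hcw).2
  rw [one_smulP] at h1
  have e1 : SmulP (⟨(u, v), hu, hv⟩ : PosS G) z = diagP u hu := Subtype.ext (smul_eq'' rfl)
  rw [e1] at h1
  have h2 := (hm _ _ z hcw).1
  rw [smulP_one] at h2
  have e2 : SmulP z (⟨(u, v), hu, hv⟩ : PosS G) = diagP v hv := Subtype.ext (smul_eq'' rfl)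
  rw [e2] at h2
  have hd : c (diagP u hu) (diagP v hv) := hr.trans (hr.symm h1) h2
  rcases lt_trichotomy u v with h | h | h
  · exact shrink c hcon h hd
  · subst h
    have hu1 : 1 < u := by
      rcases hu.lt_or_eq with h' | h'
      · exact h'
      · have h'' : (1 : G) = u := h'
        exact absurd (Subtype.ext (by rw [← h''] : ((u, u) : G × G) = (1, 1))) hwne
    exact ⟨u, hu1, hcw⟩
  · exact shrink c hcon h (hr.symm hd)

lemma pow_diag (c : PosS G → PosS G → Prop)
    (hcon : IsSgCongruence (SmulP (G := G)) c) {t : G} (ht : 1 < t)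
    (h : c eP (diagP t ht.le)) :
    ∀ n : ℕ, ∀ hn : (1 : G) ≤ t ^ (n + 1), c eP (diagP (t ^ (n + 1)) hn) := by
  obtain ⟨hr, hm⟩ := hcon
  intro n
  induction n with
  | zero => intro hn; exact ccast c (pow_one t).symm h
  | succ k ih =>
    intro hn
    have ha : (1 : G) ≤ t ^ (k + 1) := one_le_pow'' ht.le (k + 1)
    have ihk := ih ha
    set a := t ^ (k + 1) with haa
    have hB : (1 : G) ≤ t * 1⁻¹ * a := by
      rw [inv_one, mul_one]; exact one_le_mul ht.le ha
    set M : PosS G := ⟨(a, 1), ha, le_refl 1⟩ with hM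
    set N : PosS G := ⟨(1, a), le_refl 1, ha⟩ with hN
    have h1 := (hm _ _ M h).1
    have e1 : SmulP M eP = M := Subtype.ext (smul_eq'' rfl)
    have e2 : SmulP M (diagP t ht.le) = ⟨(t * 1⁻¹ * a, t), hB, ht.le⟩ :=
      Subtype.ext (smul_lt' ht)
    rw [e1, e2] at h1
    have h2 := (hm _ _ N h1).2
    have e3 : SmulP M N = diagP a ha := Subtype.ext (smul_eq'' rfl)
    have e4 : SmulP (⟨(t * 1⁻¹ * a, t), hB, ht.le⟩ : PosS G) N = diagP (t * 1⁻¹ * a) hB :=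
      Subtype.ext (by
        show Smul (t * 1⁻¹ * a, t) (1, a) = ((t * 1⁻¹ * a, t * 1⁻¹ * a) : G × G)
        rw [smul_gt' ht])
    rw [e3, e4] at h2
    have : c eP (diagP (t * 1⁻¹ * a) hB) := hr.trans ihk h2
    refine ccast c ?_ this
    rw [inv_one, mul_one, haa, ← pow_succ']

lemma shrink_to (c : PosS G → PosS G → Prop)
    (hcon : IsSgCongruence (SmulP (G := G)) c) {T s : G} {hT : 1 ≤ T} (hs : 1 ≤ s)
    (hsT : s ≤ T) (h : c eP (diagP T hT)) : c eP (diagP s hs) := by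
  obtain ⟨hr, hm⟩ := hcon
  have h1 := (hm _ _ (diagP s hs) h).1
  rw [smulP_one] at h1
  have e : SmulP (diagP s hs) (diagP T hT) = diagP T hT := by
    apply Subtype.ext
    show Smul (s, s) (T, T) = ((T, T) : G × G)
    rcases hsT.lt_or_eq with h' | h'
    · rw [smul_lt' h', inv_mul_cancel_right]
    · subst h'
      exact smul_eq'' rfl
  rw [e] at h1
  exact hr.trans h (hr.symm h1)

/-- If `G` is an archimedean linearly ordered group, then every non-trivial congruence
on the semigroup `S_G⁺` is a group congruence. -/
theorem stmt7 {G : Type*} [Group G] [LinearOrder G]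
    [CovariantClass G G (· * ·) (· ≤ ·)]
    [CovariantClass G G (Function.swap (· * ·)) (· ≤ ·)]
    (harch : IsArchGroup G)
    (c : PosS G → PosS G → Prop)
    (hcon : IsSgCongruence (SmulP (G := G)) c) (hnt : IsNontrivialRel c) :
    IsGroupCongruence (SmulP (G := G)) c := by
  obtain ⟨t, ht, hct⟩ := exists_diag c hcon hnt
  have hdiag : ∀ s : G, ∀ hs : 1 ≤ s, c eP (diagP s hs) := by
    intro s hs
    rcases hs.lt_or_eq with h1 | h1
    · obtain ⟨⟨m, hm0, hsm⟩, -⟩ := harch t s ht h1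
      obtain ⟨k, rfl⟩ := Nat.exists_eq_succ_of_ne_zero hm0.ne'
      exact shrink_to c hcon hs hsm
        (pow_diag c hcon ht hct k (one_le_pow'' ht.le (k + 1)))
    · subst h1
      exact hcon.1.refl eP
  refine ⟨eP, fun x => ⟨?_, ?_⟩, fun x => ?_⟩
  · rw [one_smulP]; exact hcon.1.refl x
  · rw [smulP_one]; exact hcon.1.refl x
  · obtain ⟨⟨a, b⟩, ha, hb⟩ := x
    refine ⟨⟨(b, a), hb, ha⟩, ?_, ?_⟩
    · have e : SmulP (⟨(a, b), ha, hb⟩ : PosS G) ⟨(b, a), hb, ha⟩ = diagP a ha :=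
        Subtype.ext (smul_eq'' rfl)
      rw [e]; exact hcon.1.symm (hdiag a ha)
    · have e : SmulP (⟨(b, a), hb, ha⟩ : PosS G) ⟨(a, b), ha, hb⟩ = diagP b hb :=
        Subtype.ext (smul_eq'' rfl)
      rw [e]; exact hcon.1.symm (hdiag b hb)
end

section
/- Let G be an archimedean linearly ordered group. Then every non-trivial congruence on the semigroup S_G is a group congruence. -/
variable {G : Type*} [Group G] [LinearOrder G]
  [CovariantClass G G (· * ·) (· ≤ ·)] [CovariantClass G G (Function.swap (· * ·)) (· ≤ ·)]

section Aux

set_option linter.unusedSectionVars false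

lemma Smul_lt {a b c' d : G} (h : b < c') : Smul (a,b) (c',d) = (c' * b⁻¹ * a, d) := by
  simp [Smul, h]

lemma Smul_eq {a b d : G} : Smul (a,b) (b,d) = (a, d) := by
  simp [Smul]

lemma Smul_gt {a b c' d : G} (h : c' < b) : Smul (a,b) (c',d) = (a, b * c'⁻¹ * d) := by
  simp [Smul, h.not_gt, h.ne']

lemma one_lt_of_lt' {x y : G} (h : x < y) : (1:G) < y * x⁻¹ := by
  simpa using mul_lt_mul_left h x⁻¹

lemma lt_shift {x y : G} (h : x < y) (t : G) : t < y * x⁻¹ * t := by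
  simpa using mul_lt_mul_left (one_lt_of_lt' h) t

variable {c : (G × G) → (G × G) → Prop}

lemma L2' (hcon : IsSgCongruence (Smul (G := G)) c) {A A' u : G} (hlt : A < A')
    (h : c (A, u) (A', u)) : ∃ p q : G, p < q ∧ c (p, p) (q, q) := by
  have h1 := (hcon.2 _ _ (u, A') h).1
  rw [Smul_gt hlt, Smul_eq] at h1
  -- h1 : c (u, A' * A⁻¹ * u) (u, u)
  have huw : u < A' * A⁻¹ * u := lt_shift hlt u
  have h2 := (hcon.2 _ _ (A' * A⁻¹ * u, A' * A⁻¹ * u) h1).2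
  rw [Smul_eq, Smul_lt huw, inv_mul_cancel_right] at h2
  exact ⟨u, A' * A⁻¹ * u, huw, hcon.1.trans (hcon.1.symm h1) h2⟩

lemma L2 (hcon : IsSgCongruence (Smul (G := G)) c) {A A' u : G} (hne : A ≠ A')
    (h : c (A, u) (A', u)) : ∃ p q : G, p < q ∧ c (p, p) (q, q) := by
  rcases hne.lt_or_gt with hlt | hlt
  · exact L2' hcon hlt h
  · exact L2' hcon hlt (hcon.1.symm h)

lemma L1' (hcon : IsSgCongruence (Smul (G := G)) c) {t v v' : G} (hlt : v < v')
    (h : c (t, v) (t, v')) : ∃ p q : G, p < q ∧ c (p, p) (q, q) := by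
  have h1 := (hcon.2 _ _ (v', t) h).2
  rw [Smul_lt hlt, Smul_eq] at h1
  -- h1 : c (v' * v⁻¹ * t, t) (t, t)
  exact L2 hcon (ne_of_gt (lt_shift hlt t)) h1

lemma L1 (hcon : IsSgCongruence (Smul (G := G)) c) {t v v' : G} (hne : v ≠ v')
    (h : c (t, v) (t, v')) : ∃ p q : G, p < q ∧ c (p, p) (q, q) := by
  rcases hne.lt_or_gt with hlt | hlt
  · exact L1' hcon hlt h
  · exact L1' hcon hlt (hcon.1.symm h)

lemma step1aux (hcon : IsSgCongruence (Smul (G := G)) c) {a u a' u' : G} (hlt : u < u')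
    (h : c (a, u) (a', u')) : ∃ p q : G, p < q ∧ c (p, p) (q, q) := by
  by_cases hA : a' = u' * u⁻¹ * a
  · -- right trick yields two congruent idempotents directly
    have h1 := (hcon.2 _ _ (u, a) h).2
    rw [Smul_eq, Smul_gt hlt, ← hA] at h1
    exact ⟨a, a', by rw [hA]; exact lt_shift hlt a, h1⟩
  · rcases lt_trichotomy a a' with h2 | h2 | h2
    · -- left trick
      have h1 := (hcon.2 _ _ (u', a') h).1
      rw [Smul_gt h2, Smul_eq] at h1
      -- h1 : c (u', a' * a⁻¹ * u) (u', u')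
      refine L1 hcon (fun hE => hA ?_) h1
      have h3 : a' * a⁻¹ = u' * u⁻¹ := by
        have := congrArg (· * u⁻¹) hE
        simpa [mul_assoc] using this
      calc a' = a' * a⁻¹ * a := by group
      _ = u' * u⁻¹ * a := by rw [h3]
    · subst h2
      exact L1 hcon (ne_of_lt hlt) h
    · have h1 := (hcon.2 _ _ (a, a) h).1
      rw [Smul_eq, Smul_gt h2] at h1
      -- h1 : c (a, u) (a, a * a'⁻¹ * u')
      exact L1 hcon (ne_of_lt (hlt.trans (lt_shift h2 u'))) h1

lemma step1 (hcon : IsSgCongruence (Smul (G := G)) c) {x y : G × G} (h : c x y)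
    (hne : x ≠ y) : ∃ p q : G, p < q ∧ c (p, p) (q, q) := by
  obtain ⟨a, u⟩ := x
  obtain ⟨a', u'⟩ := y
  rcases lt_trichotomy u u' with h2 | h2 | h2
  · exact step1aux hcon h2 h
  · subst h2
    have : a ≠ a' := fun hE => hne (by rw [hE])
    exact L2 hcon this h
  · exact step1aux hcon h2 (hcon.1.symm h)

lemma up_step (hcon : IsSgCongruence (Smul (G := G)) c) {x y : G} (hxy : x < y)
    (h : c (x, x) (y, y)) : c (y, y) (y * x⁻¹ * y, y * x⁻¹ * y) := by
  have h1 := (hcon.2 _ _ (x, y) h).2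
  rw [Smul_eq, Smul_gt hxy] at h1
  -- h1 : c (x, y) (y, y * x⁻¹ * y)
  have h2 := (hcon.2 _ _ (y, x) h1).1
  rwa [Smul_eq, Smul_lt hxy] at h2

lemma down_step (hcon : IsSgCongruence (Smul (G := G)) c) {x y : G} (hxy : x < y)
    (h : c (x, x) (y, y)) : c (x * y⁻¹ * x, x * y⁻¹ * x) (x, x) := by
  have e1 : y * x⁻¹ * (x * y⁻¹ * x) = x := by group
  have h1 := (hcon.2 _ _ (x * y⁻¹ * x, x) h).1
  rw [Smul_eq, Smul_lt hxy, e1] at h1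
  -- h1 : c (x * y⁻¹ * x, x) (x, y)
  have h2 := (hcon.2 _ _ (x, x * y⁻¹ * x) h1).2
  rwa [Smul_eq, Smul_gt hxy, e1] at h2

lemma between (hcon : IsSgCongruence (Smul (G := G)) c) {x y w : G}
    (h : c (x, x) (y, y)) (hxw : x ≤ w) (hwy : w ≤ y) : c (w, w) (y, y) := by
  have h1 := (hcon.2 _ _ (w, w) h).2
  have e1 : Smul (x, x) (w, w) = ((w : G), w) := by
    rcases eq_or_lt_of_le hxw with he | hl
    · subst he; exact Smul_eq
    · rw [Smul_lt hl, inv_mul_cancel_right]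
  have e2 : Smul (y, y) (w, w) = ((y : G), y) := by
    rcases eq_or_lt_of_le hwy with he | hl
    · subst he; exact Smul_eq
    · rw [Smul_gt hl, inv_mul_cancel_right]
  rwa [e1, e2] at h1

lemma pow_mul_lt {r : G} (hr : 1 < r) (p : G) (n : ℕ) : r ^ n * p < r ^ (n + 1) * p := by
  rw [pow_succ', mul_assoc]
  simpa using mul_lt_mul_left hr (r ^ n * p)

lemma pow_key (r p : G) (n : ℕ) :
    r ^ (n + 1) * p * (r ^ n * p)⁻¹ * (r ^ (n + 1) * p) = r ^ (n + 2) * p := by group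

lemma up_chain (hcon : IsSgCongruence (Smul (G := G)) c) {p q : G} (hpq : p < q)
    (h : c (p, p) (q, q)) (n : ℕ) :
    c (p, p) ((q * p⁻¹) ^ n * p, (q * p⁻¹) ^ n * p) := by
  have hr : (1 : G) < q * p⁻¹ := one_lt_of_lt' hpq
  have link : ∀ m : ℕ, c ((q * p⁻¹) ^ m * p, (q * p⁻¹) ^ m * p)
      ((q * p⁻¹) ^ (m + 1) * p, (q * p⁻¹) ^ (m + 1) * p) := by
    intro m
    induction m with
    | zero => simpa using h
    | succ m ih =>
      have := up_step hcon (pow_mul_lt hr p m) ih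
      rwa [pow_key] at this
  induction n with
  | zero => simpa using hcon.1.refl (p, p)
  | succ n ih => exact hcon.1.trans ih (link n)

lemma down_chain (hcon : IsSgCongruence (Smul (G := G)) c) {p q : G} (hpq : p < q)
    (h : c (p, p) (q, q)) (n : ℕ) :
    c ((p * q⁻¹) ^ n * p, (p * q⁻¹) ^ n * p) (p, p) := by
  have hs : p * q⁻¹ < 1 := by simpa using mul_lt_mul_left hpq q⁻¹
  have hlt : ∀ m : ℕ, (p * q⁻¹) ^ (m + 1) * p < (p * q⁻¹) ^ m * p := by
    intro m
    rw [pow_succ', mul_assoc]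
    simpa using mul_lt_mul_left hs ((p * q⁻¹) ^ m * p)
  have link : ∀ m : ℕ, c ((p * q⁻¹) ^ (m + 1) * p, (p * q⁻¹) ^ (m + 1) * p)
      ((p * q⁻¹) ^ m * p, (p * q⁻¹) ^ m * p) := by
    intro m
    induction m with
    | zero =>
      have := down_step hcon hpq h
      simpa using this
    | succ m ih =>
      have := down_step hcon (hlt m) ih
      rwa [pow_key] at this
  induction n with
  | zero => simpa using hcon.1.refl (p, p)
  | succ n ih => exact hcon.1.trans (link n) ih

lemma archpow (harch : IsArchGroup G) {r : G} (hr : 1 < r) (h : G) : ∃ n : ℕ, h ≤ r ^ n := by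
  rcases le_or_gt h 1 with h1 | h1
  · exact ⟨0, by simpa using h1⟩
  · obtain ⟨⟨m, _, hm⟩, -⟩ := harch r h hr h1
    exact ⟨m, hm⟩

lemma all_idem (harch : IsArchGroup G) (hcon : IsSgCongruence (Smul (G := G)) c)
    {p q : G} (hpq : p < q) (h : c (p, p) (q, q)) (g : G) : c (g, g) (p, p) := by
  have hr : (1 : G) < q * p⁻¹ := one_lt_of_lt' hpq
  rcases le_or_gt p g with hpg | hgp
  · obtain ⟨n, hn⟩ := archpow harch hr (g * p⁻¹)
    have hg : g ≤ (q * p⁻¹) ^ n * p := by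
      have := mul_le_mul_left hn p
      rwa [inv_mul_cancel_right] at this
    have hb := between hcon (up_chain hcon hpq h n) hpg hg
    exact hcon.1.trans hb (hcon.1.symm (up_chain hcon hpq h n))
  · obtain ⟨n, hn⟩ := archpow harch hr (p * g⁻¹)
    have key : (p * q⁻¹) ^ n * p ≤ g := by
      have h2 : ((q * p⁻¹) ^ n)⁻¹ ≤ (p * g⁻¹)⁻¹ := inv_le_inv_iff.mpr hn
      have h3 : (p * q⁻¹) ^ n ≤ g * p⁻¹ := by simpa [← inv_pow, mul_inv_rev] using h2
      have := mul_le_mul_left h3 p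
      rwa [inv_mul_cancel_right] at this
    exact between hcon (down_chain hcon hpq h n) key hgp.le

end Aux

/-- If `G` is an archimedean linearly ordered group, then every non-trivial congruence
on the semigroup `S_G` is a group congruence. -/
theorem stmt8 {G : Type*} [Group G] [LinearOrder G]
    [CovariantClass G G (· * ·) (· ≤ ·)]
    [CovariantClass G G (Function.swap (· * ·)) (· ≤ ·)]
    (harch : IsArchGroup G)
    (c : (G × G) → (G × G) → Prop)
    (hcon : IsSgCongruence (Smul (G := G)) c) (hnt : IsNontrivialRel c) :
    IsGroupCongruence (Smul (G := G)) c := by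
  obtain ⟨x, y, hxy, hne⟩ := hnt.1
  obtain ⟨p, q, hpq, hc⟩ := step1 hcon hxy hne
  have idem : ∀ g h : G, c (g, g) (h, h) := fun g h =>
    hcon.1.trans (all_idem harch hcon hpq hc g) (hcon.1.symm (all_idem harch hcon hpq hc h))
  refine ⟨(1, 1), ?_, ?_⟩
  · rintro ⟨a, b⟩
    constructor
    · have h1 := (hcon.2 _ _ (a, b) (idem 1 a)).2
      rwa [Smul_eq] at h1
    · have h1 := (hcon.2 _ _ (a, b) (idem b 1)).1
      rw [Smul_eq] at h1
      exact hcon.1.symm h1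
  · rintro ⟨a, b⟩
    refine ⟨(b, a), ?_, ?_⟩
    · rw [Smul_eq]
      exact idem a 1
    · rw [Smul_eq]
      exact idem b 1
end

section
/- Let A and H be linearly ordered groups, each containing more than one element, and let G = A ×ₗ H be their lexicographic product (componentwise multiplication, lexicographic order), which is again a linearly ordered group. Then the relation on S_G defined by ((a₁,b₁),(c₁,d₁)) ∼ ((a₂,b₂),(c₂,d₂)) if and only if a₁ = a₂, c₁ = c₂ and d₁⁻¹·b₁ = d₂⁻¹·b₂ is a non-trivial congruence on S_G that is not a group congruence; the analogously defined relation on S_G⁺ is a non-trivial non-group congruence on S_G⁺. In particular S_G and S_G⁺ possess non-trivial non-group congruences. -/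
variable {G : Type*} [Group G] [LinearOrder G]
  [CovariantClass G G (· * ·) (· ≤ ·)] [CovariantClass G G (Function.swap (· * ·)) (· ≤ ·)]

section LexProduct

variable {A H : Type*} [Group A] [LinearOrder A]
  [CovariantClass A A (· * ·) (· ≤ ·)] [CovariantClass A A (Function.swap (· * ·)) (· ≤ ·)]
  [Group H] [LinearOrder H]
  [CovariantClass H H (· * ·) (· ≤ ·)] [CovariantClass H H (Function.swap (· * ·)) (· ≤ ·)]

/-- The lexicographic product of the groups `A` and `H`: componentwise multiplication on
`Lex (A × H)`, which carries the lexicographic linear order. -/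
instance : Group (Lex (A × H)) := inferInstanceAs (Group (A × H))

instance : CovariantClass (Lex (A × H)) (Lex (A × H)) (· * ·) (· ≤ ·) :=
  ⟨by
    rintro c a b hab
    rcases Prod.Lex.le_iff.mp hab with hlt | ⟨h1, h2⟩
    · exact Prod.Lex.le_iff.mpr (Or.inl (mul_lt_mul_right hlt _))
    · refine Prod.Lex.le_iff.mpr (Or.inr ⟨?_, mul_le_mul_right h2 _⟩)
      show (ofLex c).1 * (ofLex a).1 = (ofLex c).1 * (ofLex b).1
      rw [h1]⟩

instance : CovariantClass (Lex (A × H)) (Lex (A × H)) (Function.swap (· * ·)) (· ≤ ·) :=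
  ⟨by
    rintro c a b hab
    rcases Prod.Lex.le_iff.mp hab with hlt | ⟨h1, h2⟩
    · exact Prod.Lex.le_iff.mpr (Or.inl (mul_lt_mul_left hlt _))
    · refine Prod.Lex.le_iff.mpr (Or.inr ⟨?_, mul_le_mul_left h2 _⟩)
      show (ofLex a).1 * (ofLex c).1 = (ofLex b).1 * (ofLex c).1
      rw [h1]⟩

/-- The relation `((a₁,b₁),(c₁,d₁)) ∼ ((a₂,b₂),(c₂,d₂))` iff `a₁ = a₂`, `c₁ = c₂` and
`d₁⁻¹·b₁ = d₂⁻¹·b₂` on `S_G` for `G = A ×ₗ H`. -/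
def lexRel (x y : Lex (A × H) × Lex (A × H)) : Prop :=
  (ofLex x.1).1 = (ofLex y.1).1 ∧ (ofLex x.2).1 = (ofLex y.2).1 ∧
    (ofLex x.2).2⁻¹ * (ofLex x.1).2 = (ofLex y.2).2⁻¹ * (ofLex y.1).2

/-- The analogous relation on `S_G⁺` for `G = A ×ₗ H`. -/
def lexRelP (x y : PosS (Lex (A × H))) : Prop := lexRel x.1 y.1

lemma lex_lt_iff' (x y : Lex (A × H)) :
    x < y ↔ (ofLex x).1 < (ofLex y).1 ∨ (ofLex x).1 = (ofLex y).1 ∧ (ofLex x).2 < (ofLex y).2 :=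
  Prod.Lex.lt_iff

lemma lex_fst_le' {x y : Lex (A × H)} (h : x ≤ y) : (ofLex x).1 ≤ (ofLex y).1 := by
  rcases Prod.Lex.le_iff.mp h with h1 | ⟨h1, _⟩
  · exact h1.le
  · exact h1.le

lemma lex_fst_le_of_lt' {x y : Lex (A × H)} (h : x < y) : (ofLex x).1 ≤ (ofLex y).1 :=
  lex_fst_le' h.le

/-- First `A`-component of the first coordinate of `Smul x y`. -/
lemma Smul_fst_A (x y : Lex (A × H) × Lex (A × H)) :
    (ofLex (Smul x y).1).1 =
      if (ofLex x.2).1 < (ofLex y.1).1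
      then (ofLex y.1).1 * (ofLex x.2).1⁻¹ * (ofLex x.1).1
      else (ofLex x.1).1 := by
  unfold Smul
  split_ifs with h1 h2 h3 h4 h5
  · rfl
  · -- x.2 < y.1 lexicographically but not in the first component: first components equal
    rcases (lex_lt_iff' _ _).mp h1 with hA | ⟨hA, _⟩
    · exact absurd hA h2
    · show (ofLex y.1).1 * (ofLex x.2).1⁻¹ * (ofLex x.1).1 = (ofLex x.1).1
      rw [hA, mul_inv_cancel, one_mul]
  · -- x.2 = y.1 but first components strictly less: impossible
    exact absurd (congrArg (fun z => (ofLex z).1) h3) h4.ne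
  · rfl
  · -- y.1 < x.2 but (ofLex x.2).1 < (ofLex y.1).1 : impossible
    have : y.1 < x.2 := lt_of_le_of_ne (not_lt.mp h1) (fun h => h3 h.symm)
    exact absurd h5 (not_lt.mpr (lex_fst_le_of_lt' this))
  · rfl

/-- First `A`-component of the second coordinate of `Smul x y`. -/
lemma Smul_snd_A (x y : Lex (A × H) × Lex (A × H)) :
    (ofLex (Smul x y).2).1 =
      if (ofLex y.1).1 < (ofLex x.2).1
      then (ofLex x.2).1 * (ofLex y.1).1⁻¹ * (ofLex y.2).1
      else (ofLex y.2).1 := by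
  unfold Smul
  split_ifs with h1 h2 h3 h4 h5
  · exact absurd h2 (not_lt.mpr (lex_fst_le_of_lt' h1))
  · rfl
  · exact absurd (congrArg (fun z => (ofLex z).1) h3).symm h4.ne
  · rfl
  · rfl
  · have hyx : y.1 < x.2 := lt_of_le_of_ne (not_lt.mp h1) (fun h => h3 h.symm)
    rcases (lex_lt_iff' _ _).mp hyx with hA | ⟨hA, _⟩
    · exact absurd hA h5
    · show (ofLex x.2).1 * (ofLex y.1).1⁻¹ * (ofLex y.2).1 = (ofLex y.2).1
      rw [← hA, mul_inv_cancel, one_mul]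

/-- The `H`-invariant of `Smul x y` is the product of the invariants. -/
lemma Smul_inv_H (x y : Lex (A × H) × Lex (A × H)) :
    (ofLex (Smul x y).2).2⁻¹ * (ofLex (Smul x y).1).2 =
      ((ofLex y.2).2⁻¹ * (ofLex y.1).2) * ((ofLex x.2).2⁻¹ * (ofLex x.1).2) := by
  unfold Smul
  split_ifs with h1 h2
  · show (ofLex y.2).2⁻¹ * ((ofLex y.1).2 * (ofLex x.2).2⁻¹ * (ofLex x.1).2) = _
    group
  · have hA : (ofLex x.2).2 = (ofLex y.1).2 := congrArg (fun z => (ofLex z).2) h2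
    show (ofLex y.2).2⁻¹ * (ofLex x.1).2 = _
    rw [← hA]
    group
  · show ((ofLex x.2).2 * (ofLex y.1).2⁻¹ * (ofLex y.2).2)⁻¹ * (ofLex x.1).2 = _
    group

lemma lexRel_compat {x x' y y' : Lex (A × H) × Lex (A × H)}
    (hx : lexRel x x') (hy : lexRel y y') : lexRel (Smul x y) (Smul x' y') := by
  obtain ⟨hx1, hx2, hx3⟩ := hx
  obtain ⟨hy1, hy2, hy3⟩ := hy
  refine ⟨?_, ?_, ?_⟩
  · rw [Smul_fst_A, Smul_fst_A, hx1, hx2, hy1]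
  · rw [Smul_snd_A, Smul_snd_A, hx2, hy1, hy2]
  · rw [Smul_inv_H, Smul_inv_H, hx3, hy3]

lemma lexRel_equivalence : Equivalence (lexRel (A := A) (H := H)) :=
  ⟨fun _ => ⟨rfl, rfl, rfl⟩,
   fun h => ⟨h.1.symm, h.2.1.symm, h.2.2.symm⟩,
   fun h h' => ⟨h.1.trans h'.1, h.2.1.trans h'.2.1, h.2.2.trans h'.2.2⟩⟩

lemma one_le_lex_of_lt {p : A} (hp : 1 < p) (h : H) : (1 : Lex (A × H)) ≤ toLex (p, h) :=
  Prod.Lex.le_iff.mpr (Or.inl hp)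

lemma one_le_lex_of_le {h : H} (hh : 1 ≤ h) : (1 : Lex (A × H)) ≤ toLex (1, h) :=
  Prod.Lex.le_iff.mpr (Or.inr ⟨rfl, hh⟩)

lemma one_le_lex_fst {x : Lex (A × H)} (h : (1 : Lex (A × H)) ≤ x) : (1 : A) ≤ (ofLex x).1 :=
  lex_fst_le' h

/-- If `G = A ×ₗ H` is the lexicographic product of two non-singleton linearly ordered
groups, then `∼` is a non-trivial congruence on `S_G` that is not a group congruence,
and likewise on `S_G⁺`; in particular `S_G` and `S_G⁺` possess non-trivial non-group
congruences. -/
theorem stmt9 [Nontrivial A] [Nontrivial H] :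
    (IsSgCongruence (Smul (G := Lex (A × H))) lexRel ∧ IsNontrivialRel (lexRel (A := A) (H := H)) ∧
      ¬ IsGroupCongruence (Smul (G := Lex (A × H))) lexRel) ∧
    (IsSgCongruence (SmulP (G := Lex (A × H))) lexRelP ∧ IsNontrivialRel (lexRelP (A := A) (H := H)) ∧
      ¬ IsGroupCongruence (SmulP (G := Lex (A × H))) lexRelP) := by
  -- basic witnesses
  obtain ⟨a, ha⟩ := exists_ne (1 : A)
  obtain ⟨b, hb⟩ := exists_ne (1 : H)
  have hmA : ∃ m : A, 1 < m := by
    rcases ha.lt_or_gt with h | h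
    · exact ⟨a⁻¹, Left.one_lt_inv_iff.mpr h⟩
    · exact ⟨a, h⟩
  obtain ⟨m, hm⟩ := hmA
  obtain ⟨k, hk⟩ : ∃ k : H, 1 < k := by
    rcases hb.lt_or_gt with h | h
    · exact ⟨b⁻¹, Left.one_lt_inv_iff.mpr h⟩
    · exact ⟨b, h⟩
  have hc : m⁻¹ < 1 := Left.inv_lt_one_iff.mpr hm
  refine ⟨⟨?_, ?_, ?_⟩, ⟨?_, ?_, ?_⟩⟩
  · -- congruence on S_G
    exact ⟨lexRel_equivalence,
      fun x y s hxy => ⟨lexRel_compat ⟨rfl, rfl, rfl⟩ hxy, lexRel_compat hxy ⟨rfl, rfl, rfl⟩⟩⟩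
  · -- nontrivial on S_G
    constructor
    · refine ⟨(toLex ((1 : A), (1 : H)), toLex ((1 : A), (1 : H))),
        (toLex ((1 : A), k), toLex ((1 : A), k)), ⟨rfl, rfl, by simp⟩, ?_⟩
      intro hxy
      have h1k : (1 : H) = k := congrArg (fun z => (ofLex z.1).2) hxy
      exact hk.ne' h1k.symm
    · refine ⟨(toLex ((1 : A), (1 : H)), toLex ((1 : A), (1 : H))),
        (toLex (m, (1 : H)), toLex ((1 : A), (1 : H))), ?_⟩
      intro hxy
      exact hm.ne (hxy.1)
  · -- not a group congruence on S_G : no identity class exists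
    rintro ⟨e, he, -⟩
    set v : A := (ofLex e.2).1 with hv
    have h1 := (he (toLex (v, (1 : H)), toLex ((1 : A), (1 : H)))).1.1
    rw [Smul_fst_A] at h1
    simp only [ofLex_toLex] at h1
    replace h1 := (if_neg (lt_irrefl v)).symm.trans h1
    -- h1 : (ofLex e.1).1 = v
    have hcv : m⁻¹ * v < v := by
      have := mul_lt_mul_left hc v
      rwa [one_mul] at this
    have h2 := (he (toLex (m⁻¹ * v, (1 : H)), toLex ((1 : A), (1 : H)))).1.1
    rw [Smul_fst_A] at h2
    simp only [ofLex_toLex] at h2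
    replace h2 := (if_neg (not_lt.mpr hcv.le)).symm.trans h2
    -- h2 : (ofLex e.1).1 = m⁻¹ * v
    have hmv : m⁻¹ * v = 1 * v := (h2.symm.trans h1).trans (one_mul v).symm
    exact hc.ne (mul_right_cancel hmv)
  · -- congruence on S_G⁺
    refine ⟨⟨fun x => lexRel_equivalence.refl x.1,
      fun h => lexRel_equivalence.symm h, fun h h' => lexRel_equivalence.trans h h'⟩, ?_⟩
    intro x y s hxy
    exact ⟨lexRel_compat ⟨rfl, rfl, rfl⟩ hxy, lexRel_compat hxy ⟨rfl, rfl, rfl⟩⟩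
  · -- nontrivial on S_G⁺
    constructor
    · refine ⟨⟨(toLex ((1 : A), (1 : H)), toLex ((1 : A), (1 : H))),
          one_le_lex_of_le le_rfl, one_le_lex_of_le le_rfl⟩,
        ⟨(toLex ((1 : A), k), toLex ((1 : A), k)),
          one_le_lex_of_le hk.le, one_le_lex_of_le hk.le⟩,
        ⟨rfl, rfl, by simp⟩, ?_⟩
      intro hxy
      have h1k : (1 : H) = k := congrArg (fun z => (ofLex z.1.1).2) hxy
      exact hk.ne' h1k.symm
    · refine ⟨⟨(toLex ((1 : A), (1 : H)), toLex ((1 : A), (1 : H))),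
          one_le_lex_of_le le_rfl, one_le_lex_of_le le_rfl⟩,
        ⟨(toLex (m, (1 : H)), toLex ((1 : A), (1 : H))),
          one_le_lex_of_lt hm _, one_le_lex_of_le le_rfl⟩, ?_⟩
      intro hxy
      exact hm.ne (hxy.1)
  · -- not a group congruence on S_G⁺
    rintro ⟨e, he, hinv⟩
    set u : A := (ofLex e.1.1).1 with hu
    set v : A := (ofLex e.1.2).1 with hvdef
    have hv1 : (1 : A) ≤ v := one_le_lex_fst e.2.2
    -- identity class must have u = 1
    have h1 := (he ⟨(toLex ((1 : A), (1 : H)), toLex ((1 : A), (1 : H))),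
      one_le_lex_of_le le_rfl, one_le_lex_of_le le_rfl⟩).1.1
    rw [show (SmulP e ⟨(toLex ((1 : A), (1 : H)), toLex ((1 : A), (1 : H))),
        one_le_lex_of_le le_rfl, one_le_lex_of_le le_rfl⟩).1
        = Smul e.1 (toLex ((1 : A), (1 : H)), toLex ((1 : A), (1 : H))) from rfl,
      Smul_fst_A] at h1
    simp only [ofLex_toLex] at h1
    replace h1 := (if_neg (not_lt.mpr hv1)).symm.trans h1
    -- h1 : u = 1
    -- no inverse for (toLex (m,1), toLex (1,1))
    obtain ⟨y, hy, -⟩ := hinv ⟨(toLex (m, (1 : H)), toLex ((1 : A), (1 : H))),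
      one_le_lex_of_lt hm _, one_le_lex_of_le le_rfl⟩
    have hy1 := hy.1
    rw [show (SmulP ⟨(toLex (m, (1 : H)), toLex ((1 : A), (1 : H))),
        one_le_lex_of_lt hm _, one_le_lex_of_le le_rfl⟩ y).1
        = Smul (toLex (m, (1 : H)), toLex ((1 : A), (1 : H))) y.1 from rfl,
      Smul_fst_A] at hy1
    simp only [ofLex_toLex] at hy1
    -- hy1 : (if 1 < w then w * 1⁻¹ * m else m) = u  where w = (ofLex y.1.1).1
    set w : A := (ofLex y.1.1).1 with hw
    by_cases hlt : (1 : A) < w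
    · replace hy1 := (if_pos hlt).symm.trans hy1
      rw [inv_one, mul_one] at hy1
      have : (1 : A) < w * m := hm.trans_le (le_mul_of_one_le_left' hlt.le)
      rw [hy1, h1] at this
      exact lt_irrefl _ this
    · replace hy1 := (if_neg hlt).symm.trans hy1
      exact hm.ne' (hy1.trans h1)

end LexProduct
end

section
/- Let G be a linearly ordered d-group. Then the multiplication on T_G = G × G × {0,1} given by (g,h,s)·(k,l,t) = (a,b,r), where a = (h ∨ k)·h⁻¹·g, b = (h ∨ k)·k⁻¹·l, and r = t if h < k, r = s if h > k, r = min(s,t) if h = k, is associative, and T_G is an inverse semigroup: for every x = (g,h,s) ∈ T_G the element y = (h,g,s) satisfies x·y·x = x and y·x·y = y, and y is the unique element of T_G with these two properties. -/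
variable {G : Type*} [Group G] [LinearOrder G]
  [CovariantClass G G (· * ·) (· ≤ ·)] [CovariantClass G G (Function.swap (· * ·)) (· ≤ ·)]

/-- The multiplication of the semigroup `T_G` on `G × G × {0,1}` (with `{0,1}` modelled
by `Bool`, `0 = false < 1 = true`): `(g,h,s)·(k,l,t) = ((h∨k)·h⁻¹·g, (h∨k)·k⁻¹·l, r)`
where `r = t` if `h < k`, `r = s` if `h > k`, and `r = min s t` if `h = k`. -/
def Tmul (x y : G × G × Bool) : G × G × Bool :=
  (max x.2.1 y.1 * x.2.1⁻¹ * x.1,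
   max x.2.1 y.1 * y.1⁻¹ * y.2.1,
   if x.2.1 < y.1 then y.2.2 else if y.1 < x.2.1 then x.2.2 else min x.2.2 y.2.2)

private lemma mmr (a b c : G) : max a b * c = max (a * c) (b * c) :=
  (max_mul_mul_right a b c).symm

private lemma key1 (h k l m : G) :
    max (max h k * k⁻¹ * l) m * (max h k * k⁻¹ * l)⁻¹ * max h k
      = max h (max l m * l⁻¹ * k) := by
  have e1 : (max h k * k⁻¹ * l)⁻¹ * max h k = l⁻¹ * k := by group
  have e2 : max h k * k⁻¹ * l * (l⁻¹ * k) = max h k := by group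
  have e3 : l * (l⁻¹ * k) = k := by group
  rw [mul_assoc, e1, mmr, e2, mul_assoc (max l m), mmr, e3, max_assoc]

private lemma key2 (h k l m : G) :
    max h (max l m * l⁻¹ * k) * (max l m * l⁻¹ * k)⁻¹ * max l m
      = max (max h k * k⁻¹ * l) m := by
  have e1 : (max l m * l⁻¹ * k)⁻¹ * max l m = k⁻¹ * l := by group
  have e2 : max l m * l⁻¹ * k * (k⁻¹ * l) = max l m := by group
  have e3 : k * (k⁻¹ * l) = l := by group
  rw [mul_assoc, e1, mmr, e2, mul_assoc (max h k), mmr, e3, ← max_assoc]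

private lemma Tmul_assoc (x y z : G × G × Bool) :
    Tmul (Tmul x y) z = Tmul x (Tmul y z) := by
  obtain ⟨g, h, s⟩ := x
  obtain ⟨k, l, t⟩ := y
  obtain ⟨m, n, u⟩ := z
  simp only [Tmul]
  refine Prod.ext ?_ (Prod.ext ?_ ?_)
  · show max (max h k * k⁻¹ * l) m * (max h k * k⁻¹ * l)⁻¹ * (max h k * h⁻¹ * g)
      = max h (max l m * l⁻¹ * k) * h⁻¹ * g
    calc max (max h k * k⁻¹ * l) m * (max h k * k⁻¹ * l)⁻¹ * (max h k * h⁻¹ * g)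
        = max (max h k * k⁻¹ * l) m * (max h k * k⁻¹ * l)⁻¹ * max h k * h⁻¹ * g := by
          group
      _ = max h (max l m * l⁻¹ * k) * h⁻¹ * g := by rw [key1]
  · show max (max h k * k⁻¹ * l) m * m⁻¹ * n
      = max h (max l m * l⁻¹ * k) * (max l m * l⁻¹ * k)⁻¹ * (max l m * m⁻¹ * n)
    calc max (max h k * k⁻¹ * l) m * m⁻¹ * n
        = max (max h k * k⁻¹ * l) m * m⁻¹ * n := rfl
      _ = max h (max l m * l⁻¹ * k) * (max l m * l⁻¹ * k)⁻¹ * max l m * m⁻¹ * n := by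
          rw [key2]
      _ = max h (max l m * l⁻¹ * k) * (max l m * l⁻¹ * k)⁻¹ * (max l m * m⁻¹ * n) := by
          group
  · show (if max h k * k⁻¹ * l < m then u
        else if m < max h k * k⁻¹ * l then
          (if h < k then t else if k < h then s else min s t)
        else min (if h < k then t else if k < h then s else min s t) u)
      = (if h < max l m * l⁻¹ * k then (if l < m then u else if m < l then t else min t u)
        else if max l m * l⁻¹ * k < h then s
        else min s (if l < m then u else if m < l then t else min t u))
    rcases lt_trichotomy h k with hk | hk | hk
    · -- h < k
      have hB : max h k * k⁻¹ * l = l := by rw [max_eq_right hk.le]; group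
      have hkC : k ≤ max l m * l⁻¹ * k := by
        have := mul_le_mul_left (le_max_left l m) (l⁻¹ * k)
        simpa [mul_assoc] using this
      have hC : h < max l m * l⁻¹ * k := lt_of_lt_of_le hk hkC
      simp [hB, hk, lt_asymm hk, hC]
    · -- h = k
      subst hk
      have hB : max h h * h⁻¹ * l = l := by simp
      rcases lt_trichotomy l m with hlm | hlm | hlm
      · have hC : h < max l m * l⁻¹ * h := by
          have := mul_lt_mul_left hlm (l⁻¹ * h)
          simpa [mul_assoc, max_eq_right hlm.le] using this
        simp [hB, hlm, lt_asymm hlm, hC]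
      · subst hlm
        have hC : max l l * l⁻¹ * h = h := by simp
        simp [hB, hC, Bool.and_assoc]
      · have hC : max l m * l⁻¹ * h = h := by rw [max_eq_left hlm.le]; group
        simp [hB, hC, hlm, lt_asymm hlm]
    · -- k < h
      have hB : max h k * k⁻¹ * l = h * k⁻¹ * l := by rw [max_eq_left hk.le]
      have hlB : l < h * k⁻¹ * l := by
        have := mul_lt_mul_left hk (k⁻¹ * l)
        simpa [mul_assoc] using this
      rcases lt_trichotomy (h * k⁻¹ * l) m with hm | hm | hm
      · have hlm : l < m := hlB.trans hm
        have hC : h < max l m * l⁻¹ * k := by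
          have := mul_lt_mul_left hm (l⁻¹ * k)
          simpa [mul_assoc, max_eq_right hlm.le] using this
        simp [hB, hm, hk, lt_asymm hk, hC, hlm]
      · have hlm : l < m := hm ▸ hlB
        have hC : max l m * l⁻¹ * k = h := by
          rw [max_eq_right hlm.le, ← hm]; group
        simp [hB, hm, hk, lt_asymm hk, hC, hlm, lt_asymm hlm]
      · have hC : max l m * l⁻¹ * k < h := by
          rcases le_or_gt m l with hml | hlm
          · calc max l m * l⁻¹ * k = k := by rw [max_eq_left hml]; group
              _ < h := hk
          · have := mul_lt_mul_left hm (l⁻¹ * k)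
            have h2 : m * (l⁻¹ * k) < h := by
              calc m * (l⁻¹ * k) < h * k⁻¹ * l * (l⁻¹ * k) := this
                _ = h := by group
            calc max l m * l⁻¹ * k = m * (l⁻¹ * k) := by
                  rw [max_eq_right hlm.le, mul_assoc]
              _ < h := h2
        simp [hB, hm, lt_asymm hm, hk, lt_asymm hk, hC, lt_asymm hC]

/-- For a linearly ordered `d`-group `G`, the multiplication of `T_G` is associative and
`T_G` is an inverse semigroup: every `x = (g,h,s)` has `y = (h,g,s)` as its unique
element with `x·y·x = x` and `y·x·y = y`. -/
theorem stmt11 {G : Type*} [Group G] [LinearOrder G]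
    [CovariantClass G G (· * ·) (· ≤ ·)]
    [CovariantClass G G (Function.swap (· * ·)) (· ≤ ·)]
    (hd : ∀ g : G, 1 < g → ∃ x : G, 1 < x ∧ x < g) :
    (∀ x y z : G × G × Bool, Tmul (Tmul x y) z = Tmul x (Tmul y z)) ∧
    ∀ x : G × G × Bool,
      Tmul (Tmul x (x.2.1, x.1, x.2.2)) x = x ∧
      Tmul (Tmul (x.2.1, x.1, x.2.2) x) (x.2.1, x.1, x.2.2) = (x.2.1, x.1, x.2.2) ∧
      ∀ y : G × G × Bool,
        Tmul (Tmul x y) x = x → Tmul (Tmul y x) y = y → y = (x.2.1, x.1, x.2.2) := by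
  refine ⟨Tmul_assoc, ?_⟩
  rintro ⟨g, h, s⟩
  refine ⟨?_, ?_, ?_⟩
  · simp [Tmul]
  · simp [Tmul]
  · rintro ⟨k, l, t⟩ H1 H2
    simp only [Tmul, Prod.mk.injEq] at H1 H2 ⊢
    obtain ⟨e1, e2, e3⟩ := H1
    obtain ⟨f1, f2, f3⟩ := H2
    -- from e2 : max B g * g⁻¹ * h = h, get max B g = g
    have hBg : max (max h k * k⁻¹ * l) g = g := by
      have h2 : max (max h k * k⁻¹ * l) g * (g⁻¹ * h) = g * (g⁻¹ * h) := by
        rw [← mul_assoc, e2, mul_inv_cancel_left]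
      exact mul_right_cancel h2
    -- from e1, get A = B
    have hAB : max h k * h⁻¹ * g = max h k * k⁻¹ * l := by
      rw [hBg, mul_assoc] at e1
      have h3 : (max h k * k⁻¹ * l)⁻¹ * (max h k * h⁻¹ * g) = 1 :=
        mul_eq_left.mp e1
      exact (inv_mul_eq_one.mp h3).symm
    have hkey : h⁻¹ * g = k⁻¹ * l := by
      rw [mul_assoc, mul_assoc] at hAB
      exact mul_left_cancel hAB
    have hkh : k ≤ h := by
      have hBle : max h k * k⁻¹ * l ≤ g := max_eq_right_iff.mp (max_comm _ g ▸ hBg)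
      have : max h k * (h⁻¹ * g) ≤ h * (h⁻¹ * g) := by
        rw [mul_inv_cancel_left, hkey, ← mul_assoc]; exact hBle
      have := le_of_mul_le_mul_right' this
      exact (max_le_iff.mp this).2
    -- symmetric side
    have hB'k : max (max l g * g⁻¹ * h) k = k := by
      have h2 : max (max l g * g⁻¹ * h) k * (k⁻¹ * l) = k * (k⁻¹ * l) := by
        rw [← mul_assoc, f2, mul_inv_cancel_left]
      exact mul_right_cancel h2
    have hA'B' : max l g * l⁻¹ * k = max l g * g⁻¹ * h := by
      rw [hB'k, mul_assoc] at f1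
      have h3 : (max l g * g⁻¹ * h)⁻¹ * (max l g * l⁻¹ * k) = 1 :=
        mul_eq_left.mp f1
      exact (inv_mul_eq_one.mp h3).symm
    have hkey' : l⁻¹ * k = g⁻¹ * h := by
      rw [mul_assoc, mul_assoc] at hA'B'
      exact mul_left_cancel hA'B'
    have hgl : g ≤ l := by
      have hBle : max l g * g⁻¹ * h ≤ k := max_eq_right_iff.mp (max_comm _ k ▸ hB'k)
      have : max l g * (l⁻¹ * k) ≤ l * (l⁻¹ * k) := by
        rw [mul_inv_cancel_left, hkey', ← mul_assoc]; exact hBle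
      have := le_of_mul_le_mul_right' this
      exact (max_le_iff.mp this).2
    have hinv : h⁻¹ ≤ k⁻¹ := inv_le_inv_iff.mpr hkh
    have e5 : h⁻¹ * l = h⁻¹ * g :=
      le_antisymm (by rw [hkey]; exact mul_le_mul_left hinv l)
        (mul_le_mul_right hgl h⁻¹)
    have hlg : l = g := mul_left_cancel e5
    have hkheq : k = h := by
      have : k⁻¹ * l = h⁻¹ * l := by rw [← hkey, e5]
      have := mul_right_cancel this
      exact inv_injective this
    refine ⟨hkheq, hlg, ?_⟩
    rw [hkheq, hlg] at e3 f3
    have hc : max h h * h⁻¹ * g = g := by simp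
    have hc' : max g g * g⁻¹ * h = h := by simp
    rw [hc] at e3
    rw [hc'] at f3
    simp only [lt_irrefl, if_neg (lt_irrefl _)] at e3 f3
    cases s <;> cases t <;> simp_all
end

section
/- Let G be an archimedean linearly ordered d-group and let 𝔠 be a non-trivial congruence on T_G. Then either the quotient semigroup T_G/𝔠 is a group, or 𝔠 equals the congruence ∼_id (identifying triples with equal first two coordinates), in which case T_G/𝔠 is isomorphic to the semigroup S_G. The analogous dichotomy holds for non-trivial congruences on T_G⁺, with quotient a group or isomorphic to S_G⁺. -/
variable {G : Type*} [Group G] [LinearOrder G]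
  [CovariantClass G G (· * ·) (· ≤ ·)] [CovariantClass G G (Function.swap (· * ·)) (· ≤ ·)]

/-- The carrier of the semigroup `T_G⁺` on the positive cone. -/
abbrev PosT (G : Type*) [Group G] [LinearOrder G] : Type _ :=
  {x : G × G × Bool // 1 ≤ x.1 ∧ 1 ≤ x.2.1}

theorem tmul_mem {x y : G × G × Bool} (hx : 1 ≤ x.1 ∧ 1 ≤ x.2.1) (hy : 1 ≤ y.1 ∧ 1 ≤ y.2.1) :
    1 ≤ (Tmul x y).1 ∧ 1 ≤ (Tmul x y).2.1 := by
  unfold Tmul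
  refine ⟨one_le_mul ?_ hx.1, one_le_mul ?_ hy.2⟩
  · have h4 := mul_le_mul_left (le_max_left x.2.1 y.1) x.2.1⁻¹
    rwa [mul_inv_cancel] at h4
  · have h4 := mul_le_mul_left (le_max_right x.2.1 y.1) y.1⁻¹
    rwa [mul_inv_cancel] at h4

/-- The multiplication of the semigroup `T_G⁺`. -/
def TmulP (x y : PosT G) : PosT G := ⟨Tmul x.1 y.1, tmul_mem x.2 y.2⟩

/-- The relation `∼_id` on `T_G`: `(g,h,s) ∼_id (k,l,t)` iff `g = k` and `h = l`. -/
def tidRel (x y : G × G × Bool) : Prop := x.1 = y.1 ∧ x.2.1 = y.2.1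

/-- The relation `∼_id` on `T_G⁺`. -/
def tidRelP (x y : PosT G) : Prop := x.1.1 = y.1.1 ∧ x.1.2.1 = y.1.2.1


set_option linter.unusedSectionVars false
set_option linter.unusedVariables false

namespace StmtAux

lemma Tm_lt {g h k l : G} {s t : Bool} (hlt : h < k) :
    Tmul (g,h,s) (k,l,t) = (k*h⁻¹*g, l, t) := by
  simp [Tmul, max_eq_right hlt.le, hlt, hlt.not_gt]

lemma Tm_eq {g h l : G} {s t : Bool} :
    Tmul (g,h,s) (h,l,t) = (g, l, min s t) := by
  simp [Tmul]

lemma Tm_gt {g h k l : G} {s t : Bool} (hlt : k < h) :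
    Tmul (g,h,s) (k,l,t) = (g, h*k⁻¹*l, s) := by
  simp [Tmul, max_eq_left hlt.le, hlt, hlt.not_gt]

lemma min_true (s : Bool) : min true s = s := by cases s <;> rfl
lemma min_true' (s : Bool) : min s true = s := by cases s <;> rfl

lemma one_lt_dd {a b : G} (h : a < b) : 1 < b * a⁻¹ := by
  have := mul_lt_mul_left h a⁻¹; rwa [mul_inv_cancel] at this

lemma one_le_dd {a b : G} (h : a ≤ b) : 1 ≤ b * a⁻¹ := by
  have := mul_le_mul_left h a⁻¹; rwa [mul_inv_cancel] at this

/-- Packaged hypotheses for the core argument: `Q` is an upward closed set of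
coordinates containing `1`, and `c` behaves like a congruence relative to `Q`. -/
structure AuxHyp (Q : G → Prop) (c : G × G × Bool → G × G × Bool → Prop) : Prop where
  q1 : Q 1
  qup : ∀ {a b : G}, a ≤ b → Q a → Q b
  crefl : ∀ x : G × G × Bool, Q x.1 → Q x.2.1 → c x x
  csymm : ∀ {x y}, c x y → c y x
  ctrans : ∀ {x y z}, c x y → c y z → c x z
  cmul : ∀ {x y} (s : G × G × Bool), Q s.1 → Q s.2.1 → c x y →
      c (Tmul s x) (Tmul s y) ∧ c (Tmul x s) (Tmul y s)

variable {Q : G → Prop} {c : G × G × Bool → G × G × Bool → Prop}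

lemma aux_tid (H : AuxHyp Q c) {g h : G} {s t : Bool}
    (hQg : Q g) (hQh : Q h) (hc : c (g,h,s) (g,h,t)) (hst : s ≠ t) :
    ∀ a l, Q a → Q l → c (a,l,false) (a,l,true) := by
  have hft : c (g,h,false) (g,h,true) := by
    cases s <;> cases t <;> simp at hst <;> first | exact hc | exact H.csymm hc
  intro a l Qa Ql
  have s1 := (H.cmul (a,g,true) Qa hQg hft).1
  rw [Tm_eq, Tm_eq] at s1
  have s2 := (H.cmul (h,l,true) hQh Ql s1).2
  rw [Tm_eq, Tm_eq] at s2
  simpa using s2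

lemma aux_row (H : AuxHyp Q c) {g h k l : G} {s t : Bool}
    (hQg : Q g) (hQh : Q h) (hQk : Q k) (hQl : Q l)
    (hc : c (g,h,s) (k,l,t)) (hgood : h⁻¹*g ≠ l⁻¹*k) :
    ∃ p q : G, Q p ∧ Q q ∧ p ≠ q ∧ ∀ r, Q r → c (p,r,true) (q,r,true) := by
  set u0 : G := (h⁻¹*g ⊔ l⁻¹*k) * (h⁻¹*g ⊓ l⁻¹*k)⁻¹ with hu0def
  have hu0 : 1 < u0 := one_lt_dd (inf_lt_sup.mpr hgood)
  set w1 : G := (h ⊔ l) * u0 with hw1def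
  have hsup : (h ⊔ l) < w1 := lt_mul_of_one_lt_right' _ hu0
  have hhw : h < w1 := lt_of_le_of_lt le_sup_left hsup
  have hlw : l < w1 := lt_of_le_of_lt le_sup_right hsup
  have hQw1 : Q w1 := H.qup (le_of_lt hhw) hQh
  refine ⟨w1*h⁻¹*g, w1*l⁻¹*k, ?_, ?_, ?_, ?_⟩
  · exact H.qup (le_mul_of_one_le_left' (one_le_dd hhw.le)) hQg
  · exact H.qup (le_mul_of_one_le_left' (one_le_dd hlw.le)) hQk
  · intro heq
    apply hgood
    have : w1 * (h⁻¹*g) = w1 * (l⁻¹*k) := by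
      rw [← mul_assoc, ← mul_assoc]; exact heq
    exact mul_left_cancel this
  · intro r Qr
    have s1 := (H.cmul (w1,r,true) hQw1 Qr hc).2
    rwa [Tm_lt hhw, Tm_lt hlw] at s1

lemma aux_rowToDiag (H : AuxHyp Q c)
    (hdg : ∀ g : G, 1 < g → ∃ x : G, 1 < x ∧ x < g)
    {p q : G} (hpq : p < q) (hQp : Q p) (hQq : Q q)
    (row : ∀ r, Q r → c (p,r,true) (q,r,true)) :
    ∃ A B : G, ∃ σ τ : Bool, A < B ∧ Q A ∧ Q B ∧ c (A,A,σ) (B,B,τ) := by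
  obtain ⟨x0, hx1, hx2⟩ := hdg (q*p⁻¹) (one_lt_dd hpq)
  set b : G := x0 * p with hbdef
  have hpb : p < b := by
    have := mul_lt_mul_left hx1 p; rwa [one_mul] at this
  have hbq : b < q := by
    have := mul_lt_mul_left hx2 p; rwa [inv_mul_cancel_right] at this
  have hQb : Q b := H.qup hpb.le hQp
  have s1 := (H.cmul (b,b,true) hQb hQb (row p hQp)).1
  rw [Tm_gt hpb, Tm_lt hbq, inv_mul_cancel_right, inv_mul_cancel_right] at s1
  exact ⟨p, b, true, true, hpb, hQp, hQb,
    H.csymm (H.ctrans s1 (H.csymm (row p hQp)))⟩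

lemma aux_badToDiag (H : AuxHyp Q c) {g h d : G} {s t : Bool}
    (hd1 : 1 < d) (hQg : Q g) (hQh : Q h)
    (hc : c (g,h,s) (d*g, d*h, t)) :
    ∃ A B : G, ∃ σ τ : Bool, A < B ∧ Q A ∧ Q B ∧ c (A,A,σ) (B,B,τ) := by
  have hgd : g < d*g := by
    have := mul_lt_mul_left hd1 g; rwa [one_mul] at this
  have s1 := (H.cmul (h,g,true) hQh hQg hc).1
  rw [Tm_eq, Tm_lt hgd, mul_inv_cancel_right] at s1
  have hhd : h < d*h := by
    have := mul_lt_mul_left hd1 h; rwa [one_mul] at this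
  exact ⟨h, d*h, _, _, hhd, hQh, H.qup hhd.le hQh, s1⟩

lemma aux_extract (H : AuxHyp Q c)
    (hdg : ∀ g : G, 1 < g → ∃ x : G, 1 < x ∧ x < g)
    {x y : G × G × Bool} (hQx : Q x.1 ∧ Q x.2.1) (hQy : Q y.1 ∧ Q y.2.1)
    (hc : c x y) (hne : ¬(x.1 = y.1 ∧ x.2.1 = y.2.1)) :
    ∃ A B : G, ∃ σ τ : Bool, A < B ∧ Q A ∧ Q B ∧ c (A,A,σ) (B,B,τ) := by
  obtain ⟨g, h, s⟩ := x
  obtain ⟨k, l, t⟩ := y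
  simp only at hQx hQy hne
  obtain ⟨hQg, hQh⟩ := hQx
  obtain ⟨hQk, hQl⟩ := hQy
  by_cases hbad : h⁻¹*g = l⁻¹*k
  · set d : G := l * h⁻¹ with hddef
    have hk : k = d*g := by
      have : k = l * (l⁻¹ * k) := by rw [← mul_assoc, mul_inv_cancel, one_mul]
      rw [this, ← hbad, ← mul_assoc]
    have hl : l = d*h := by rw [hddef, inv_mul_cancel_right]
    have hdne : d ≠ 1 := by
      intro h1
      rw [h1, one_mul] at hk hl
      exact hne ⟨hk.symm, hl.symm⟩
    rcases hdne.lt_or_gt with hlt | hlt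
    · -- d < 1 : use the symmetric pair with ratio d⁻¹
      have hg : g = d⁻¹*k := by rw [hk, ← mul_assoc, inv_mul_cancel, one_mul]
      have hh : h = d⁻¹*l := by rw [hl, ← mul_assoc, inv_mul_cancel, one_mul]
      have hidd : (1:G) < d⁻¹ := by
        have := mul_lt_mul_right hlt d⁻¹
        rwa [inv_mul_cancel, mul_one] at this
      have hc' : c (k,l,t) (d⁻¹*k, d⁻¹*l, s) := by
        rw [← hg, ← hh]; exact H.csymm hc
      exact aux_badToDiag H hidd hQk hQl hc'
    · have hc' : c (g,h,s) (d*g, d*h, t) := by rw [← hk, ← hl]; exact hc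
      exact aux_badToDiag H hlt hQg hQh hc'
  · obtain ⟨p, q, hQp, hQq, hpq, row⟩ := aux_row H hQg hQh hQk hQl hc hbad
    rcases hpq.lt_or_gt with hlt | hlt
    · exact aux_rowToDiag H hdg hlt hQp hQq row
    · exact aux_rowToDiag H hdg hlt hQq hQp (fun r hr => H.csymm (row r hr))

lemma aux_shift (H : AuxHyp Q c)
    (hdg : ∀ g : G, 1 < g → ∃ x : G, 1 < x ∧ x < g)
    {A B : G} {σ τ : Bool} (hAB : A < B) (hQA : Q A) (hQB : Q B)
    (hc : c (A,A,σ) (B,B,τ)) :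
    ∃ e : G, 1 < e ∧ ∀ v r, Q v → Q r → c (v,r,true) (e*v, e*r, τ) := by
  obtain ⟨x0, hx1, hx2⟩ := hdg (B*A⁻¹) (one_lt_dd hAB)
  set p : G := x0 * A with hpdef
  have hAp : A < p := by
    have := mul_lt_mul_left hx1 A; rwa [one_mul] at this
  have hpB : p < B := by
    have := mul_lt_mul_left hx2 A; rwa [inv_mul_cancel_right] at this
  have hQp : Q p := H.qup hAp.le hQA
  refine ⟨B * p⁻¹, one_lt_dd hpB, fun v r hQv hQr => ?_⟩
  have s1 := (H.cmul (v,p,true) hQv hQp hc).1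
  rw [Tm_gt hAp, Tm_lt hpB, inv_mul_cancel_right] at s1
  have s2 := (H.cmul (p,r,true) hQp hQr s1).2
  rw [Tm_eq, Tm_gt hpB] at s2
  simpa [mul_assoc] using s2

lemma aux_diagAll (H : AuxHyp Q c)
    (harch : ∀ a b : G, 1 < a → 1 < b →
      (∃ m : ℕ, 0 < m ∧ b ≤ a ^ m) ∧ ∃ n : ℕ, 0 < n ∧ a ≤ b ^ n)
    {e : G} {τ : Bool} (he : 1 < e)
    (hshift : ∀ v r, Q v → Q r → c (v,r,true) (e*v, e*r, τ)) :
    ∀ a b : G, ∀ s t : Bool, Q a → Q b → c (a,a,s) (b,b,t) := by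
  have d1 : ∀ (g : G) (s : Bool), Q g → c (g,g,s) (e*g, e*g, τ) := by
    intro g s hQg
    cases s
    · have t1 := hshift g g hQg hQg
      have hgg : g < e*g := by
        have := mul_lt_mul_left he g; rwa [one_mul] at this
      have t2 := (H.cmul (g,g,false) hQg hQg t1).2
      rw [Tm_eq, Tm_gt hgg, inv_mul_cancel_right] at t2
      simpa using t2
    · exact hshift g g hQg hQg
  have hpow : ∀ n : ℕ, (1:G) ≤ e^n := fun n => one_le_pow_of_one_le' he.le n
  have hgep : ∀ (n : ℕ) (g : G), g ≤ e^(n+1)*g :=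
    fun n g => le_mul_of_one_le_left' (hpow (n+1))
  have dn : ∀ (n : ℕ) (g : G) (s : Bool), Q g →
      c (g,g,s) (e^(n+1)*g, e^(n+1)*g, τ) := by
    intro n
    induction n with
    | zero => intro g s hQg; simpa [pow_one] using d1 g s hQg
    | succ n ih =>
      intro g s hQg
      have h1 := ih g s hQg
      have h2 := d1 (e^(n+1)*g) τ (H.qup (hgep n g) hQg)
      have h3 : e*(e^(n+1)*g) = e^(n+2)*g := by
        rw [← mul_assoc, ← pow_succ']
      rw [h3] at h2
      exact H.ctrans h1 h2
  have dint : ∀ (A B u : G) (σ τ' s : Bool), A < u → u < B → Q A → Q B → Q u →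
      c (A,A,σ) (B,B,τ') → c (u,u,s) (B,B,τ') := by
    intro A B u σ τ' s hAu huB hQA hQB hQu hc
    have t1 := (H.cmul (u,u,true) hQu hQu hc).1
    rw [Tm_gt hAu, Tm_lt huB, inv_mul_cancel_right, inv_mul_cancel_right] at t1
    cases s
    · have t2 := (H.cmul (u,u,false) hQu hQu t1).2
      rw [Tm_eq, Tm_gt huB, inv_mul_cancel_right] at t2
      simpa using t2
    · exact t1
  have heq : ∀ (a : G) (s t : Bool), Q a → c (a,a,s) (a,a,t) :=
    fun a s t hQa => H.ctrans (d1 a s hQa) (H.csymm (d1 a t hQa))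
  have hmain : ∀ a b : G, ∀ s t : Bool, Q a → Q b → a < b → c (a,a,s) (b,b,t) := by
    intro a b s t hQa hQb hab
    obtain ⟨⟨m, hm, hba⟩, -⟩ := harch e (b*a⁻¹) he (one_lt_dd hab)
    obtain ⟨m', rfl⟩ : ∃ m', m = m' + 1 :=
      ⟨m - 1, by omega⟩
    have hble : b ≤ e^(m'+1)*a := by
      have := mul_le_mul_left hba a
      rwa [inv_mul_cancel_right] at this
    have h1 := dn m' a s hQa
    rcases hble.lt_or_eq with hblt | hbeq
    · have h2 := dint a (e^(m'+1)*a) b s τ t hab hblt hQa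
        (H.qup (hgep m' a) hQa) hQb h1
      exact H.ctrans h1 (H.csymm h2)
    · rw [← hbeq] at h1
      exact H.ctrans h1 (heq b τ t hQb)
  intro a b s t hQa hQb
  rcases lt_trichotomy a b with h | h | h
  · exact hmain a b s t hQa hQb h
  · rw [h]; exact heq b s t hQb
  · exact H.csymm (hmain b a t s hQb hQa h)

lemma aux_group (H : AuxHyp Q c)
    (hlow : ∀ g : G, Q g → ∃ b, Q b ∧ b ≤ g ∧ b ≤ 1)
    (hdia : ∀ a b : G, ∀ s t : Bool, Q a → Q b → c (a,a,s) (b,b,t)) :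
    (∀ x : G × G × Bool, Q x.1 → Q x.2.1 →
        c (Tmul (1,1,true) x) x ∧ c (Tmul x (1,1,true)) x) ∧
    ∀ x : G × G × Bool, Q x.1 → Q x.2.1 → ∃ y : G × G × Bool,
        (Q y.1 ∧ Q y.2.1) ∧ c (Tmul x y) (1,1,true) ∧ c (Tmul y x) (1,1,true) := by
  have habsorb : ∀ (g h : G) (s : Bool) (b : G), b ≤ g → Tmul (b,b,true) (g,h,s) = (g,h,s) := by
    intro g h s b hbg
    rcases hbg.lt_or_eq with h1 | h1
    · rw [Tm_lt h1, inv_mul_cancel_right]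
    · subst h1; rw [Tm_eq, min_true]
  have habsorb' : ∀ (g h : G) (s : Bool) (b : G), b ≤ h → Tmul (g,h,s) (b,b,true) = (g,h,s) := by
    intro g h s b hbh
    rcases hbh.lt_or_eq with h1 | h1
    · rw [Tm_gt h1, inv_mul_cancel_right]
    · subst h1; rw [Tm_eq, min_true']
  constructor
  · rintro ⟨g, h, s⟩ hQg hQh
    simp only at hQg hQh
    constructor
    · obtain ⟨b, hQb, hbg, hb1⟩ := hlow g hQg
      have step := (H.cmul (g,h,s) hQg hQh (hdia 1 b true true H.q1 hQb)).2
      rwa [habsorb g h s b hbg] at step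
    · obtain ⟨b, hQb, hbh, hb1⟩ := hlow h hQh
      have step := (H.cmul (g,h,s) hQg hQh (hdia 1 b true true H.q1 hQb)).1
      rwa [habsorb' g h s b hbh] at step
  · rintro ⟨g, h, s⟩ hQg hQh
    simp only at hQg hQh
    refine ⟨(h,g,true), ⟨hQh, hQg⟩, ?_, ?_⟩
    · rw [Tm_eq]; exact hdia g 1 _ true hQg H.q1
    · rw [Tm_eq]; exact hdia h 1 _ true hQh H.q1

lemma aux_main {Q : G → Prop} {c : G × G × Bool → G × G × Bool → Prop}
    (H : AuxHyp Q c)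
    (harch : ∀ a b : G, 1 < a → 1 < b →
      (∃ m : ℕ, 0 < m ∧ b ≤ a ^ m) ∧ ∃ n : ℕ, 0 < n ∧ a ≤ b ^ n)
    (hdg : ∀ g : G, 1 < g → ∃ x : G, 1 < x ∧ x < g)
    (hlow : ∀ g : G, Q g → ∃ b, Q b ∧ b ≤ g ∧ b ≤ 1)
    (hnt : ∃ x y : G × G × Bool, (Q x.1 ∧ Q x.2.1) ∧ (Q y.1 ∧ Q y.2.1) ∧ c x y ∧ x ≠ y) :
    ((∀ x : G × G × Bool, Q x.1 → Q x.2.1 →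
        c (Tmul (1,1,true) x) x ∧ c (Tmul x (1,1,true)) x) ∧
      ∀ x : G × G × Bool, Q x.1 → Q x.2.1 → ∃ y : G × G × Bool,
        (Q y.1 ∧ Q y.2.1) ∧ c (Tmul x y) (1,1,true) ∧ c (Tmul y x) (1,1,true)) ∨
    (∀ x y : G × G × Bool, (Q x.1 ∧ Q x.2.1) → (Q y.1 ∧ Q y.2.1) →
        (c x y ↔ (x.1 = y.1 ∧ x.2.1 = y.2.1))) := by
  by_cases hex : ∃ x y : G × G × Bool,
      (Q x.1 ∧ Q x.2.1) ∧ (Q y.1 ∧ Q y.2.1) ∧ c x y ∧ ¬(x.1 = y.1 ∧ x.2.1 = y.2.1)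
  · left
    obtain ⟨x, y, hQx, hQy, hc, hne⟩ := hex
    obtain ⟨A, B, σ, τ, hAB, hQA, hQB, hAB'⟩ := aux_extract H hdg hQx hQy hc hne
    obtain ⟨e, he, hshift⟩ := aux_shift H hdg hAB hQA hQB hAB'
    exact aux_group H hlow (aux_diagAll H harch he hshift)
  · right
    push_neg at hex
    intro x y hQx hQy
    constructor
    · intro hc
      exact hex x y hQx hQy hc
    · intro hcoord
      obtain ⟨x0, y0, hQx0, hQy0, hc0, hne0⟩ := hnt
      have hco0 := hex x0 y0 hQx0 hQy0 hc0
      obtain ⟨g0, h0, s0⟩ := x0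
      obtain ⟨k0, l0, t0⟩ := y0
      simp only at hco0
      obtain ⟨he1, he2⟩ := hco0
      subst he1; subst he2
      have hst : s0 ≠ t0 := by
        intro h; apply hne0; rw [h]
      have htid := aux_tid H hQx0.1 hQx0.2 hc0 hst
      obtain ⟨g, h, s⟩ := x
      obtain ⟨k, l, t⟩ := y
      simp only at hcoord hQx hQy
      obtain ⟨h1, h2⟩ := hcoord
      subst h1; subst h2
      cases s <;> cases t
      · exact H.crefl _ hQx.1 hQx.2
      · exact htid g h hQx.1 hQx.2
      · exact H.csymm (htid g h hQx.1 hQx.2)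
      · exact H.crefl _ hQx.1 hQx.2

end StmtAux

namespace StmtAux

lemma aux_hom {G : Type*} [Group G] [LinearOrder G]
    [CovariantClass G G (· * ·) (· ≤ ·)]
    [CovariantClass G G (Function.swap (· * ·)) (· ≤ ·)] (x y : G × G × Bool) :
    ((Tmul x y).1, (Tmul x y).2.1) = Smul (x.1, x.2.1) (y.1, y.2.1) := by
  obtain ⟨g, h, s⟩ := x
  obtain ⟨k, l, t⟩ := y
  rcases lt_trichotomy h k with hc | hc | hc
  · rw [Tm_lt hc]; simp [Smul, hc]
  · subst hc; rw [Tm_eq]; simp [Smul]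
  · rw [Tm_gt hc]; simp [Smul, hc.not_gt, hc.ne']

end StmtAux

/-- For an archimedean linearly ordered `d`-group `G`, every non-trivial congruence `𝔠`
on `T_G` either is a group congruence, or equals `∼_id`, in which case the quotient
`T_G/𝔠` is isomorphic to `S_G` (expressed by a surjective homomorphism onto `S_G` whose
fibres are the `𝔠`-classes). The analogous dichotomy holds for `T_G⁺` and `S_G⁺`. -/
theorem stmt15 {G : Type*} [Group G] [LinearOrder G]
    [CovariantClass G G (· * ·) (· ≤ ·)]
    [CovariantClass G G (Function.swap (· * ·)) (· ≤ ·)]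
    (harch : IsArchGroup G)
    (hd : ∀ g : G, 1 < g → ∃ x : G, 1 < x ∧ x < g) :
    (∀ c : (G × G × Bool) → (G × G × Bool) → Prop,
      IsSgCongruence (Tmul (G := G)) c → IsNontrivialRel c →
        IsGroupCongruence (Tmul (G := G)) c ∨
          ((∀ x y, c x y ↔ tidRel x y) ∧
            ∃ f : G × G × Bool → G × G, Function.Surjective f ∧
              (∀ x y, f (Tmul x y) = Smul (f x) (f y)) ∧ ∀ x y, f x = f y ↔ c x y)) ∧
    (∀ c : PosT G → PosT G → Prop,
      IsSgCongruence (TmulP (G := G)) c → IsNontrivialRel c →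
        IsGroupCongruence (TmulP (G := G)) c ∨
          ((∀ x y, c x y ↔ tidRelP x y) ∧
            ∃ f : PosT G → PosS G, Function.Surjective f ∧
              (∀ x y, f (TmulP x y) = SmulP (f x) (f y)) ∧ ∀ x y, f x = f y ↔ c x y)) := by
  constructor
  · -- the case of `T_G`
    intro c hcong hnt
    have H : StmtAux.AuxHyp (fun _ : G => True) c :=
      { q1 := trivial
        qup := fun _ _ => trivial
        crefl := fun x _ _ => hcong.1.refl x
        csymm := fun {x y} h => hcong.1.symm h
        ctrans := fun {x y z} h1 h2 => hcong.1.trans h1 h2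
        cmul := fun {x y} s _ _ h => hcong.2 x y s h }
    have hlow : ∀ g : G, (fun _ : G => True) g → ∃ b, (fun _ : G => True) b ∧ b ≤ g ∧ b ≤ 1 :=
      fun g _ => ⟨1 ⊓ g, trivial, inf_le_right, inf_le_left⟩
    obtain ⟨⟨x0, y0, hc0, hne0⟩, -⟩ := hnt
    have hnt' : ∃ x y : G × G × Bool, (True ∧ True) ∧ (True ∧ True) ∧ c x y ∧ x ≠ y :=
      ⟨x0, y0, ⟨trivial, trivial⟩, ⟨trivial, trivial⟩, hc0, hne0⟩
    rcases StmtAux.aux_main H harch hd hlow hnt' with ⟨hid, hinv⟩ | hiff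
    · left
      refine ⟨((1:G), (1:G), true), fun x => hid x trivial trivial, fun x => ?_⟩
      obtain ⟨y, -, h1, h2⟩ := hinv x trivial trivial
      exact ⟨y, h1, h2⟩
    · right
      have hiff' : ∀ x y : G × G × Bool, c x y ↔ tidRel x y := by
        intro x y
        exact hiff x y ⟨trivial, trivial⟩ ⟨trivial, trivial⟩
      refine ⟨hiff', fun x => (x.1, x.2.1), ?_, ?_, ?_⟩
      · rintro ⟨a, b⟩; exact ⟨(a, b, true), rfl⟩
      · intro x y; exact StmtAux.aux_hom x y
      · intro x y
        rw [hiff' x y]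
        exact Prod.ext_iff
  · -- the case of `T_G⁺`
    intro c hcong hnt
    set cb : G × G × Bool → G × G × Bool → Prop :=
      fun u v => ∃ (hu : 1 ≤ u.1 ∧ 1 ≤ u.2.1) (hv : 1 ≤ v.1 ∧ 1 ≤ v.2.1),
        c ⟨u, hu⟩ ⟨v, hv⟩ with hcb
    have H : StmtAux.AuxHyp (fun g : G => 1 ≤ g) cb :=
      { q1 := le_refl 1
        qup := fun hab ha => ha.trans hab
        crefl := fun x h1 h2 => ⟨⟨h1, h2⟩, ⟨h1, h2⟩, hcong.1.refl _⟩
        csymm := by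
          rintro x y ⟨hu, hv, h⟩
          exact ⟨hv, hu, hcong.1.symm h⟩
        ctrans := by
          rintro x y z ⟨hu, hv, h1⟩ ⟨hv', hw, h2⟩
          exact ⟨hu, hw, hcong.1.trans h1 h2⟩
        cmul := by
          rintro x y s hs1 hs2 ⟨hu, hv, h⟩
          have h2 := hcong.2 ⟨x, hu⟩ ⟨y, hv⟩ ⟨s, hs1, hs2⟩ h
          exact ⟨⟨tmul_mem ⟨hs1, hs2⟩ hu, tmul_mem ⟨hs1, hs2⟩ hv, h2.1⟩,
            ⟨tmul_mem hu ⟨hs1, hs2⟩, tmul_mem hv ⟨hs1, hs2⟩, h2.2⟩⟩ }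
    have hlow : ∀ g : G, 1 ≤ g → ∃ b : G, 1 ≤ b ∧ b ≤ g ∧ b ≤ 1 :=
      fun g hg => ⟨1, le_refl 1, hg, le_refl 1⟩
    obtain ⟨⟨X0, Y0, hc0, hne0⟩, -⟩ := hnt
    have hnt' : ∃ x y : G × G × Bool, ((1:G) ≤ x.1 ∧ (1:G) ≤ x.2.1) ∧
        ((1:G) ≤ y.1 ∧ (1:G) ≤ y.2.1) ∧ cb x y ∧ x ≠ y :=
      ⟨X0.1, Y0.1, X0.2, Y0.2, ⟨X0.2, Y0.2, hc0⟩, fun h => hne0 (Subtype.ext h)⟩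
    rcases StmtAux.aux_main H harch hd hlow hnt' with ⟨hid, hinv⟩ | hiff
    · left
      refine ⟨⟨((1:G), (1:G), true), le_refl 1, le_refl 1⟩, fun X => ?_, fun X => ?_⟩
      · obtain ⟨h1, h2⟩ := hid X.1 X.2.1 X.2.2
        obtain ⟨p1, p2, hcc1⟩ := h1
        obtain ⟨p3, p4, hcc2⟩ := h2
        exact ⟨hcc1, hcc2⟩
      · obtain ⟨y, ⟨hy1, hy2⟩, r1, r2⟩ := hinv X.1 X.2.1 X.2.2
        obtain ⟨p1, p2, hr1⟩ := r1
        obtain ⟨p3, p4, hr2⟩ := r2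
        exact ⟨⟨y, hy1, hy2⟩, hr1, hr2⟩
    · right
      have hiff' : ∀ X Y : PosT G, c X Y ↔ tidRelP X Y := by
        intro X Y
        constructor
        · intro h
          exact (hiff X.1 Y.1 X.2 Y.2).1 ⟨X.2, Y.2, h⟩
        · intro h
          obtain ⟨p1, p2, hcc⟩ := (hiff X.1 Y.1 X.2 Y.2).2 h
          exact hcc
      refine ⟨hiff', fun X => ⟨(X.1.1, X.1.2.1), X.2.1, X.2.2⟩, ?_, ?_, ?_⟩
      · rintro ⟨⟨a, b⟩, ha, hb⟩
        exact ⟨⟨(a, b, true), ha, hb⟩, rfl⟩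
      · intro X Y
        exact Subtype.ext (StmtAux.aux_hom X.1 Y.1)
      · intro X Y
        rw [hiff' X Y]
        constructor
        · intro h
          have := Subtype.ext_iff.mp h
          exact Prod.ext_iff.mp this
        · intro h
          exact Subtype.ext (Prod.ext_iff.mpr h)
end

section
/- Let G be an archimedean linearly ordered group and 𝔠_mg the least group congruence on S_G (given by x 𝔠_mg y iff x·z = y·z for some idempotent z of S_G). Then the quotient S_G/𝔠_mg is isomorphic, as a group, to G. The same holds for S_G⁺: the quotient S_G⁺/𝔠_mg is isomorphic to G. -/
variable {G : Type*} [Group G] [LinearOrder G]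
  [CovariantClass G G (· * ·) (· ≤ ·)] [CovariantClass G G (Function.swap (· * ·)) (· ≤ ·)]

/-- The least group congruence `𝔠_mg` on `S_G`: `x 𝔠_mg y` iff `x·z = y·z` for some
idempotent `z`. -/
def cmgS (x y : G × G) : Prop := ∃ z : G × G, Smul z z = z ∧ Smul x z = Smul y z

/-- The least group congruence `𝔠_mg` on `S_G⁺`. -/
def cmgSP (x y : PosS G) : Prop := ∃ z : PosS G, SmulP z z = z ∧ SmulP x z = SmulP y z

lemma Smul_hom (x y : G × G) :
    (Smul x y).1⁻¹ * (Smul x y).2 = (x.1⁻¹ * x.2) * (y.1⁻¹ * y.2) := by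
  unfold Smul
  split_ifs with h1 h2
  · simp [mul_assoc]
  · simp only [h2]; group
  · group

lemma Smul_diag_idem (t : G) : Smul (t, t) (t, t) = (t, t) := by
  simp [Smul]

lemma Smul_diag_s18 (x : G × G) {t : G} (h : x.2 ≤ t) :
    Smul x (t, t) = (t * x.2⁻¹ * x.1, t) := by
  rcases lt_or_eq_of_le h with h | h
  · simp [Smul, h]
  · simp [Smul, ← h]

/-- For an archimedean linearly ordered group `G`, the quotient `S_G/𝔠_mg` is isomorphic
(as a group) to `G`, and likewise `S_G⁺/𝔠_mg` is isomorphic to `G`: there is a surjective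
homomorphism onto `G` whose fibres are exactly the `𝔠_mg`-classes. -/
theorem stmt18 {G : Type*} [Group G] [LinearOrder G]
    [CovariantClass G G (· * ·) (· ≤ ·)]
    [CovariantClass G G (Function.swap (· * ·)) (· ≤ ·)]
    (harch : IsArchGroup G) :
    (∃ f : G × G → G, Function.Surjective f ∧
      (∀ x y : G × G, f (Smul x y) = f x * f y) ∧
      ∀ x y : G × G, f x = f y ↔ cmgS x y) ∧
    (∃ f : PosS G → G, Function.Surjective f ∧
      (∀ x y : PosS G, f (SmulP x y) = f x * f y) ∧
      ∀ x y : PosS G, f x = f y ↔ cmgSP x y) := by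
  constructor
  · refine ⟨fun p => p.1⁻¹ * p.2, fun g => ⟨(1, g), by simp⟩, Smul_hom, fun x y => ?_⟩
    constructor
    · intro h
      refine ⟨(max x.2 y.2, max x.2 y.2), Smul_diag_idem _, ?_⟩
      rw [Smul_diag_s18 x (le_max_left _ _), Smul_diag_s18 y (le_max_right _ _)]
      have : x.2⁻¹ * x.1 = y.2⁻¹ * y.1 := by
        have := congrArg (fun g => g⁻¹) h
        simpa [mul_inv_rev] using this
      rw [mul_assoc, mul_assoc, this]
    · rintro ⟨z, hz, hxz⟩
      have h1 := Smul_hom x z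
      have h2 := Smul_hom y z
      rw [hxz, h2] at h1
      have hz1 : z.1⁻¹ * z.2 = 1 := by
        have := Smul_hom z z
        rw [hz] at this
        exact mul_eq_left.mp this.symm
      rw [hz1, mul_one, mul_one] at h1
      exact h1.symm
  · refine ⟨fun p => p.1.1⁻¹ * p.1.2, fun g => ?_, fun x y => Smul_hom x.1 y.1, fun x y => ?_⟩
    · rcases le_total 1 g with h | h
      · exact ⟨⟨(1, g), by simp [h]⟩, by simp⟩
      · exact ⟨⟨(g⁻¹, 1), by simp [h, one_le_inv']⟩, by simp⟩
    constructor
    · intro h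
      set t := max x.1.2 y.1.2 with ht
      have ht1 : (1:G) ≤ t := le_trans x.2.2 (le_max_left _ _)
      refine ⟨⟨(t, t), ht1, ht1⟩, ?_, ?_⟩
      · exact Subtype.ext (Smul_diag_idem t)
      · apply Subtype.ext
        show Smul x.1 (t, t) = Smul y.1 (t, t)
        rw [Smul_diag_s18 x.1 (le_max_left _ _), Smul_diag_s18 y.1 (le_max_right _ _)]
        have : x.1.2⁻¹ * x.1.1 = y.1.2⁻¹ * y.1.1 := by
          have := congrArg (fun g => g⁻¹) h
          simpa [mul_inv_rev] using this
        rw [mul_assoc, mul_assoc, this]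
    · rintro ⟨z, hz, hxz⟩
      have h1 := Smul_hom x.1 z.1
      have h2 := Smul_hom y.1 z.1
      have hxz' : Smul x.1 z.1 = Smul y.1 z.1 := congrArg Subtype.val hxz
      rw [hxz', h2] at h1
      have hzz : Smul z.1 z.1 = z.1 := congrArg Subtype.val hz
      have hz1 : z.1.1⁻¹ * z.1.2 = 1 := by
        have := Smul_hom z.1 z.1
        rw [hzz] at this
        exact mul_eq_left.mp this.symm
      rw [hz1, mul_one, mul_one] at h1
      exact h1.symm
end
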